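/- arXiv:1603.04419 — 6 statements merged into one kernel-verified Lean document; each statement's English description precedes it below -/
import Mathlib

section
/- A nonnegative linear map does not expand the Hilbert metric: let A be a D×D real matrix with all entries nonnegative, and let x, y ∈ ℝ^D have all entries strictly positive. If the vectors A·x and A·y also have all entries strictly positive, then d_H(A·x, A·y) ≤ d_H(x, y). -/
/-- The Hilbert projective metric on the interior of the positive orthant of `ℝ^D`:
`d_H(x,y) = log ((max_i x_i/y_i) / (min_i x_i/y_i))`. -/
noncomputable def dH {D : ℕ} (x y : Fin D → ℝ) : ℝ :=
  Real.log ((⨆ i, x i / y i) / ⨅ i, x i / y i)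

theorem nonnegative_map_does_not_expand_hilbert_metric
    (D : ℕ) (A : Matrix (Fin D) (Fin D) ℝ) (hA : ∀ i j, 0 ≤ A i j)
    (x y : Fin D → ℝ) (hx : ∀ i, 0 < x i) (hy : ∀ i, 0 < y i)
    (hAx : ∀ i, 0 < A.mulVec x i) (hAy : ∀ i, 0 < A.mulVec y i) :
    dH (A.mulVec x) (A.mulVec y) ≤ dH x y := by
  rcases Nat.eq_zero_or_pos D with hD | hD
  · subst hD
    haveI : IsEmpty (Fin 0) := inferInstance
    simp [dH, Real.iSup_of_isEmpty, Real.iInf_of_isEmpty]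
  haveI : Nonempty (Fin D) := Fin.pos_iff_nonempty.mp hD
  set M := ⨆ i, x i / y i with hM
  set m := ⨅ i, x i / y i with hm
  have hbddA : BddAbove (Set.range fun i => x i / y i) :=
    (Set.finite_range _).bddAbove
  have hbddB : BddBelow (Set.range fun i => x i / y i) :=
    (Set.finite_range _).bddBelow
  have hmpos : 0 < m := by
    obtain ⟨i, hi⟩ := exists_eq_ciInf_of_finite (f := fun i => x i / y i)
    rw [hm, ← hi]
    exact div_pos (hx i) (hy i)
  have hMpos : 0 < M := by
    obtain ⟨i, hi⟩ := exists_eq_ciSup_of_finite (f := fun i => x i / y i)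
    rw [hM, ← hi]
    exact div_pos (hx i) (hy i)
  -- key pointwise bounds
  have hxle : ∀ j, x j ≤ M * y j := fun j => by
    have : x j / y j ≤ M := le_ciSup hbddA j
    exact (div_le_iff₀ (hy j)).mp this
  have hxge : ∀ j, m * y j ≤ x j := fun j => by
    have : m ≤ x j / y j := ciInf_le hbddB j
    exact (le_div_iff₀ (hy j)).mp this
  have hup : ∀ i, A.mulVec x i ≤ M * A.mulVec y i := by
    intro i
    simp only [Matrix.mulVec, dotProduct, Finset.mul_sum]
    refine Finset.sum_le_sum fun j _ => ?_
    calc A i j * x j ≤ A i j * (M * y j) :=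
          mul_le_mul_of_nonneg_left (hxle j) (hA i j)
      _ = M * (A i j * y j) := by ring
  have hlo : ∀ i, m * A.mulVec y i ≤ A.mulVec x i := by
    intro i
    simp only [Matrix.mulVec, dotProduct, Finset.mul_sum]
    refine Finset.sum_le_sum fun j _ => ?_
    calc m * (A i j * y j) = A i j * (m * y j) := by ring
      _ ≤ A i j * x j := mul_le_mul_of_nonneg_left (hxge j) (hA i j)
  have hsup : (⨆ i, A.mulVec x i / A.mulVec y i) ≤ M :=
    ciSup_le fun i => (div_le_iff₀ (hAy i)).mpr (hup i)
  have hinf : m ≤ ⨅ i, A.mulVec x i / A.mulVec y i :=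
    le_ciInf fun i => (le_div_iff₀ (hAy i)).mpr (hlo i)
  have hinfpos : 0 < ⨅ i, A.mulVec x i / A.mulVec y i := lt_of_lt_of_le hmpos hinf
  have hsuppos : 0 < ⨆ i, A.mulVec x i / A.mulVec y i := by
    obtain ⟨i, hi⟩ := exists_eq_ciSup_of_finite (f := fun i => A.mulVec x i / A.mulVec y i)
    rw [← hi]
    exact div_pos (hAx i) (hAy i)
  unfold dH
  apply Real.log_le_log (div_pos hsuppos hinfpos)
  exact div_le_div₀ hMpos.le hsup hmpos hinf
end

section
/- Birkhoff's contraction theorem: let A be a D×D real matrix with all entries strictly positive, let Δ(A) := sup{d_H(A·u, A·v) : u, v ∈ ℝ^D with all entries strictly positive} be its projective diameter, and let k(A) := inf{λ ≥ 0 : d_H(A·x, A·y) ≤ λ·d_H(x,y) for all x, y ∈ ℝ^D with all entries strictly positive} be its contraction ratio. Then k(A) = tanh(Δ(A)/4); in particular, since Δ(A) < ∞, A is a strict contraction of the Hilbert metric: d_H(A·x, A·y) ≤ tanh(Δ(A)/4)·d_H(x, y) with tanh(Δ(A)/4) < 1. -/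
open Real Filter

section BirkhoffAux
section helpers
variable {D : ℕ}

lemma iSup_eq_max [Nonempty (Fin D)] {f : Fin D → ℝ} {i : Fin D} (h : ∀ j, f j ≤ f i) :
    (⨆ j, f j) = f i :=
  le_antisymm (ciSup_le h) (le_ciSup (Set.Finite.bddAbove (Set.finite_range f)) i)

lemma iInf_eq_min [Nonempty (Fin D)] {f : Fin D → ℝ} {i : Fin D} (h : ∀ j, f i ≤ f j) :
    (⨅ j, f j) = f i :=
  le_antisymm (ciInf_le (Set.Finite.bddBelow (Set.finite_range f)) i) (le_ciInf h)

end helpers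

-- key polynomial inequality
lemma key_poly (f g p : ℝ) (hf : 1 ≤ f) (hg : 1 ≤ g) (hp : 0 ≤ p) :
    (f^2*g^2*p+1)*(p+1)*(f+g)^2 ≤ (1+f*g)^2*((f^2*p+1)*(g^2*p+1)) := by
  have key : (1+f*g)^2*((f^2*p+1)*(g^2*p+1)) - (f^2*g^2*p+1)*(p+1)*(f+g)^2
      = (f^2-1)*((g^2-1)*(f*g*p-1)^2) := by ring
  nlinarith [mul_nonneg (mul_nonneg (by nlinarith : (0:ℝ) ≤ f^2-1) (by nlinarith : (0:ℝ) ≤ g^2-1)) (sq_nonneg (f*g*p-1))]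

-- monotone Mobius
lemma mobius_mono {a b s t : ℝ} (ha : 0 < a) (hab : a ≤ b) (hs : 0 ≤ s) (hst : s ≤ t) :
    (b*s+a)/(s+1) ≤ (b*t+a)/(t+1) := by
  rw [div_le_div_iff₀ (by linarith) (by linarith)]
  nlinarith

lemma mobius_pos {a b s : ℝ} (ha : 0 < a) (hb : 0 < b) (hs : 0 ≤ s) : 0 < (b*s+a)/(s+1) := by
  positivity

lemma mobius_ge {a b s : ℝ} (ha : 0 < a) (hab : a ≤ b) (hs : 0 ≤ s) : a ≤ (b*s+a)/(s+1) := by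
  rw [le_div_iff₀ (by linarith)]; nlinarith

lemma mobius_le {a b s : ℝ} (ha : 0 < a) (hab : a ≤ b) (hs : 0 ≤ s) : (b*s+a)/(s+1) ≤ b := by
  rw [div_le_iff₀ (by linarith)]; nlinarith

lemma star_ineq {f : ℝ} (hf : 1 ≤ f) {g : ℝ} (hg : 1 ≤ g) :
    Real.log (1+f*g) - Real.log (f+g) ≤ (f-1)/(f+1) * Real.log g := by
  set c : ℝ := (f-1)/(f+1) with hc
  set F : ℝ → ℝ := fun x => c * Real.log x - (Real.log (1+f*x) - Real.log (f+x)) with hF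
  have hf0 : (0:ℝ) < f := by linarith
  have hderiv : ∀ x ∈ interior (Set.Ici (1:ℝ)), HasDerivAt F
      ((f-1)*f*(x-1)^2/((f+1)*x*(1+f*x)*(f+x))) x := by
    intro x hx
    rw [interior_Ici] at hx
    have hx1 : (1:ℝ) < x := hx
    have hx0 : (0:ℝ) < x := by linarith
    have h1 : (0:ℝ) < 1 + f*x := by nlinarith
    have h2 : (0:ℝ) < f + x := by linarith
    have d1 : HasDerivAt (fun y : ℝ => c * Real.log y) (c * x⁻¹) x :=
      (Real.hasDerivAt_log hx0.ne').const_mul c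
    have d2i : HasDerivAt (fun y : ℝ => 1 + f*y) f x := by
      simpa using ((hasDerivAt_id x).const_mul f).const_add 1
    have d2 : HasDerivAt (fun y : ℝ => Real.log (1+f*y)) ((1+f*x)⁻¹ * f) x :=
      HasDerivAt.comp (h₂ := Real.log) x (Real.hasDerivAt_log h1.ne') d2i
    have d3i : HasDerivAt (fun y : ℝ => f + y) 1 x := by
      simpa using (hasDerivAt_id x).const_add f
    have d3 : HasDerivAt (fun y : ℝ => Real.log (f+y)) ((f+x)⁻¹ * 1) x :=
      (Real.hasDerivAt_log h2.ne').comp x d3i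
    have : HasDerivAt F _ x := d1.sub (d2.sub d3)
    convert this using 1
    rw [hc]
    field_simp
    ring
  have hmono : MonotoneOn F (Set.Ici 1) := by
    apply monotoneOn_of_deriv_nonneg (convex_Ici 1)
    · apply ContinuousOn.sub
      · apply ContinuousOn.mul continuousOn_const
        intro x hx
        exact (Real.continuousAt_log (by simp at hx; linarith)).continuousWithinAt
      · apply ContinuousOn.sub
        · intro x hx
          simp only [Set.mem_Ici] at hx
          exact ((Real.continuousAt_log (by nlinarith)).comp
            (by fun_prop : Continuous fun y : ℝ => 1 + f*y).continuousAt).continuousWithinAt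
        · intro x hx
          simp only [Set.mem_Ici] at hx
          exact ((Real.continuousAt_log (by nlinarith)).comp
            (by fun_prop : Continuous fun y : ℝ => f + y).continuousAt).continuousWithinAt
    · intro x hx
      exact (hderiv x hx).differentiableAt.differentiableWithinAt
    · intro x hx
      rw [(hderiv x hx).deriv]
      rw [interior_Ici] at hx
      have hx1 : (1:ℝ) < x := hx
      have h1 : (0:ℝ) < 1 + f*x := by nlinarith
      apply div_nonneg
      · have : (0:ℝ) ≤ (f-1)*f := by nlinarith
        positivity
      · positivity
  have h0 : F 1 = 0 := by
    simp only [hF, Real.log_one, mul_zero, mul_one]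
    rw [show 1 + f = f + 1 by ring]
    ring
  have := hmono (Set.mem_Ici.mpr le_rfl) (Set.mem_Ici.mpr hg) hg
  rw [h0] at this
  simp only [hF] at this
  linarith

lemma slope_lim {f : ℝ} (hf : 1 < f) :
    Tendsto (fun g => (Real.log (1+f*g) - Real.log (f+g)) / Real.log g)
      (nhdsWithin 1 (Set.Ioi 1)) (nhds ((f-1)/(f+1))) := by
  have hf0 : (0:ℝ) < f := by linarith
  set N : ℝ → ℝ := fun g => Real.log (1+f*g) - Real.log (f+g) with hN
  have h1 : (0:ℝ) < 1 + f*1 := by nlinarith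
  have h2 : (0:ℝ) < f + 1 := by linarith
  have d2i : HasDerivAt (fun y : ℝ => 1 + f*y) f 1 := by
    simpa using ((hasDerivAt_id (1:ℝ)).const_mul f).const_add 1
  have d2 : HasDerivAt (fun y : ℝ => Real.log (1+f*y)) ((1+f*1)⁻¹ * f) 1 :=
    HasDerivAt.comp (h₂ := Real.log) 1 (Real.hasDerivAt_log h1.ne') d2i
  have d3i : HasDerivAt (fun y : ℝ => f + y) 1 1 := by
    simpa using (hasDerivAt_id (1:ℝ)).const_add f
  have d3 : HasDerivAt (fun y : ℝ => Real.log (f+y)) ((f+1)⁻¹ * 1) 1 :=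
    (Real.hasDerivAt_log h2.ne').comp 1 d3i
  have dN : HasDerivAt N ((f-1)/(f+1)) 1 := by
    have : HasDerivAt N _ 1 := d2.sub d3
    convert this using 1
    field_simp
    ring
  have dL : HasDerivAt Real.log 1 1 := by
    simpa using Real.hasDerivAt_log one_ne_zero
  have hsub : nhdsWithin (1:ℝ) (Set.Ioi 1) ≤ nhdsWithin 1 {(1:ℝ)}ᶜ :=
    nhdsWithin_mono 1 (fun x hx => ne_of_gt hx)
  have t1 : Tendsto (slope N 1) (nhdsWithin 1 (Set.Ioi 1)) (nhds ((f-1)/(f+1))) :=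
    (hasDerivAt_iff_tendsto_slope.mp dN).mono_left hsub
  have t2 : Tendsto (slope Real.log 1) (nhdsWithin 1 (Set.Ioi 1)) (nhds 1) :=
    (hasDerivAt_iff_tendsto_slope.mp dL).mono_left hsub
  have t := t1.div t2 one_ne_zero
  rw [div_one] at t
  apply t.congr'
  filter_upwards [self_mem_nhdsWithin] with g hg
  have hg1 : (1:ℝ) < g := hg
  have hne : g - 1 ≠ 0 := by linarith
  have hN1 : N 1 = 0 := by
    simp only [hN, mul_one]
    rw [show 1 + f = f + 1 by ring]
    ring
  show slope N 1 g / slope Real.log 1 g = _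
  rw [slope_def_field, slope_def_field, hN1, Real.log_one, sub_zero, sub_zero]
  rw [div_div_div_comm, div_self hne, div_one]

lemma tanh_log_div_four {φ : ℝ} (hφ : 0 < φ) :
    Real.tanh (Real.log φ / 4) = (Real.sqrt φ - 1)/(Real.sqrt φ + 1) := by
  set t : ℝ := Real.log φ / 4 with ht
  have h2 : Real.exp (Real.log φ / 2) ^ 2 = φ := by
    rw [sq, ← Real.exp_add]
    rw [show Real.log φ / 2 + Real.log φ / 2 = Real.log φ by ring, Real.exp_log hφ]
  have hs : Real.sqrt φ = Real.exp (Real.log φ / 2) := by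
    rw [← Real.sqrt_sq (Real.exp_pos (Real.log φ / 2)).le, h2]
  have hE : Real.exp t * Real.exp t = Real.sqrt φ := by
    rw [← Real.exp_add, hs]
    congr 1
    rw [ht]; ring
  have hEpos := Real.exp_pos t
  rw [Real.tanh_eq_sinh_div_cosh, Real.sinh_eq, Real.cosh_eq, Real.exp_neg, ← hE]
  have hne : Real.exp t ≠ 0 := hEpos.ne'
  have hne2 : Real.exp t * Real.exp t + 1 ≠ 0 := by positivity
  field_simp

lemma ratio_val1 {f g Z : ℝ} (hf0 : 0 < f) (hg0 : 0 < g) (hZ : 0 < Z) :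
    (g^2*((f/g)*Z) + Z)/((f/g)*Z + Z) = g*(1+f*g)/(f+g) := by
  have hden : 0 < (f/g)*Z + Z := add_pos (mul_pos (div_pos hf0 hg0) hZ) hZ
  have hfg : 0 < f + g := by linarith
  rw [div_eq_div_iff hden.ne' hfg.ne']
  field_simp
  ring

lemma ratio_val2 {f g Z : ℝ} (hf0 : 0 < f) (hg0 : 0 < g) (hZ : 0 < Z) :
    (g^2*((1/(f*g))*Z) + Z)/((1/(f*g))*Z + Z) = g*(f+g)/(1+f*g) := by
  have hden : 0 < (1/(f*g))*Z + Z :=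
    add_pos (mul_pos (div_pos one_pos (mul_pos hf0 hg0)) hZ) hZ
  have hfg : 0 < 1 + f*g := by nlinarith
  rw [div_eq_div_iff hden.ne' hfg.ne']
  field_simp
  ring

lemma tendsto_logratio {c1 c2 s1 s2 : ℝ} (h1 : 0 < c1) (h2 : 0 < c2) :
    Filter.Tendsto (fun ε : ℝ => Real.log ((c1 + ε*s1)/(c2 + ε*s2)))
      (nhdsWithin 0 (Set.Ioi 0)) (nhds (Real.log (c1/c2))) := by
  have t1 : Filter.Tendsto (fun ε : ℝ => c1 + ε*s1) (nhds 0) (nhds c1) := by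
    have hc : Continuous (fun ε : ℝ => c1 + ε*s1) := by fun_prop
    have h := hc.tendsto (0:ℝ)
    simpa using h
  have t2 : Filter.Tendsto (fun ε : ℝ => c2 + ε*s2) (nhds 0) (nhds c2) := by
    have hc : Continuous (fun ε : ℝ => c2 + ε*s2) := by fun_prop
    have h := hc.tendsto (0:ℝ)
    simpa using h
  have t3 := t1.div t2 h2.ne'
  have t4 := (Real.continuousAt_log (div_pos h1 h2).ne').tendsto.comp t3
  exact t4.mono_left nhdsWithin_le_nhds


end BirkhoffAux

section dHlem
variable {D : ℕ} [Nonempty (Fin D)]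

lemma dH_le_of_bounds {x y : Fin D → ℝ} {a b : ℝ} (ha : 0 < a)
    (h1 : ∀ i, a ≤ x i / y i) (h2 : ∀ i, x i / y i ≤ b) :
    dH x y ≤ Real.log b - Real.log a := by
  have hS : (⨆ i, x i / y i) ≤ b := ciSup_le h2
  have hI : a ≤ ⨅ i, x i / y i := le_ciInf h1
  have hSpos : 0 < ⨆ i, x i / y i := by
    obtain ⟨i⟩ := (inferInstance : Nonempty (Fin D))
    calc (0:ℝ) < a := ha
    _ ≤ x i / y i := h1 i
    _ ≤ ⨆ i, x i / y i := le_ciSup (f := fun k => x k / y k) (Set.Finite.bddAbove (Set.finite_range _)) i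
  rw [dH, Real.log_div hSpos.ne' (by linarith : (0:ℝ) < ⨅ i, x i / y i).ne']
  have := Real.log_le_log hSpos hS
  have h2' := Real.log_le_log ha hI
  linarith

lemma dH_ge_pair {x y : Fin D → ℝ} (hx : ∀ i, 0 < x i) (hy : ∀ i, 0 < y i) (i j : Fin D) :
    Real.log (x i / y i) - Real.log (x j / y j) ≤ dH x y := by
  have hr : ∀ k, 0 < x k / y k := fun k => div_pos (hx k) (hy k)
  have hS : x i / y i ≤ ⨆ k, x k / y k := le_ciSup (f := fun k => x k / y k) (Set.Finite.bddAbove (Set.finite_range _)) i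
  have hI : (⨅ k, x k / y k) ≤ x j / y j := ciInf_le (Set.Finite.bddBelow (Set.finite_range _)) j
  obtain ⟨m, hm⟩ := Finite.exists_min (fun k => x k / y k)
  have hIpos : 0 < ⨅ k, x k / y k := by
    have : x m / y m ≤ ⨅ k, x k / y k := le_ciInf hm
    calc (0:ℝ) < x m / y m := hr m
    _ ≤ _ := this
  have hSpos : (0:ℝ) < ⨆ k, x k / y k := lt_of_lt_of_le (hr i) hS
  rw [dH, Real.log_div hSpos.ne' hIpos.ne']
  have l1 := Real.log_le_log (hr i) hS
  have l2 := Real.log_le_log hIpos hI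
  linarith

lemma dH_smul_self {y : Fin D → ℝ} {a : ℝ} (ha : 0 < a) (hy : ∀ i, 0 < y i) :
    dH (fun i => a * y i) y = 0 := by
  have : ∀ i, (a * y i) / y i = a := fun i => by
    rw [mul_div_assoc, div_self (hy i).ne', mul_one]
  simp only [dH, this, ciSup_const, ciInf_const, div_self ha.ne', Real.log_one]

end dHlem

section matlem
variable {D : ℕ} {A : Matrix (Fin D) (Fin D) ℝ}

lemma mulVec_pos (hA : ∀ i j, 0 < A i j) {u : Fin D → ℝ} (hu : ∀ k, 0 ≤ u k)
    {k0 : Fin D} (hk0 : 0 < u k0) (i : Fin D) : 0 < A.mulVec u i := by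
  rw [Matrix.mulVec, dotProduct]
  exact Finset.sum_pos' (fun k _ => mul_nonneg (hA i k).le (hu k))
    ⟨k0, Finset.mem_univ _, mul_pos (hA i k0) hk0⟩

lemma mulVec_pos' (hA : ∀ i j, 0 < A i j) {u : Fin D → ℝ} (hu : ∀ k, 0 < u k)
    (i : Fin D) : 0 < A.mulVec u i := by
  obtain ⟨k⟩ := (⟨i⟩ : Nonempty (Fin D))
  exact mulVec_pos hA (fun k => (hu k).le) (hu k) i

lemma quasi_bound {φ : ℝ} (hA : ∀ i j, 0 < A i j)
    (hmax : ∀ i j k l, A i k * A j l ≤ φ * (A j k * A i l))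
    {u v : Fin D → ℝ} (hu : ∀ k, 0 ≤ u k) (hv : ∀ k, 0 ≤ v k) (i j : Fin D) :
    A.mulVec u i * A.mulVec v j ≤ φ * (A.mulVec u j * A.mulVec v i) := by
  simp only [Matrix.mulVec, dotProduct]
  rw [Finset.sum_mul_sum, Finset.sum_mul_sum, Finset.mul_sum]
  apply Finset.sum_le_sum
  intro k _
  rw [Finset.mul_sum]
  apply Finset.sum_le_sum
  intro l _
  have h := hmax i j k l
  have huv : 0 ≤ u k * v l := mul_nonneg (hu k) (hv l)
  calc A i k * u k * (A j l * v l) = (A i k * A j l) * (u k * v l) := by ring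
  _ ≤ (φ * (A j k * A i l)) * (u k * v l) := mul_le_mul_of_nonneg_right h huv
  _ = φ * (A j k * u k * (A i l * v l)) := by ring

lemma mulVec_ind {ε : ℝ} (k0 : Fin D) (i : Fin D) :
    A.mulVec (fun m => (if m = k0 then (1:ℝ) else 0) + ε) i
      = A i k0 + ε * ∑ m, A i m := by
  simp only [Matrix.mulVec, dotProduct, mul_add, Finset.sum_add_distrib, mul_ite,
    mul_one, mul_zero]
  rw [Finset.sum_ite_eq' Finset.univ k0 (fun k => A i k)]
  simp [Finset.mul_sum, mul_comm]

end matlem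

lemma chain_ineq {φ a b P q : ℝ} (hφ1 : 1 ≤ φ) (ha : 0 < a) (hab : a ≤ b)
    (hP : 0 < P) (hq : 0 < q) (hPq : P ≤ φ*q) :
    Real.log ((b*P+a)/(P+1)) - Real.log ((b*q+a)/(q+1))
      ≤ (Real.sqrt φ - 1)/(Real.sqrt φ + 1) * (Real.log b - Real.log a) := by
  have hb : 0 < b := lt_of_lt_of_le ha hab
  set f : ℝ := Real.sqrt φ with hfdef
  have hf1 : 1 ≤ f := Real.one_le_sqrt.mpr hφ1
  have hf2 : f^2 = φ := Real.sq_sqrt (by linarith)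
  set g : ℝ := Real.sqrt (b/a) with hgdef
  have hba1 : 1 ≤ b/a := (one_le_div ha).mpr hab
  have hg1 : 1 ≤ g := Real.one_le_sqrt.mpr hba1
  have hg2 : g^2 = b/a := Real.sq_sqrt (by linarith)
  have hbeq : b = a * g^2 := by rw [hg2]; field_simp
  have hφq : 0 < φ * q := by nlinarith
  have hXpos : 0 < (b*P+a)/(P+1) := mobius_pos ha hb hP.le
  have hYpos : 0 < (b*q+a)/(q+1) := mobius_pos ha hb hq.le
  have hX'pos : 0 < (b*(φ*q)+a)/(φ*q+1) := mobius_pos ha hb hφq.le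
  have step1 : Real.log ((b*P+a)/(P+1)) ≤ Real.log ((b*(φ*q)+a)/(φ*q+1)) :=
    Real.log_le_log hXpos (mobius_mono ha hab hP.le hPq)
  have hfg : 0 < f + g := by linarith
  have hfgpos : (0:ℝ) < 1 + f*g := by nlinarith
  have hWpos : 0 < (1+f*g)/(f+g) := div_pos hfgpos hfg
  have hpoly : (b*(φ*q)+a)*((q+1)*(f+g)^2) ≤ (b*q+a)*(1+f*g)^2*(φ*q+1) := by
    have key := key_poly f g q hf1 hg1 hq.le
    have h2 := mul_le_mul_of_nonneg_left key ha.le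
    calc (b*(φ*q)+a)*((q+1)*(f+g)^2)
        = a * ((f^2*g^2*q+1)*(q+1)*(f+g)^2) := by rw [hbeq, ← hf2]; ring
      _ ≤ a * ((1+f*g)^2*((f^2*q+1)*(g^2*q+1))) := h2
      _ = (b*q+a)*(1+f*g)^2*(φ*q+1) := by rw [hbeq, ← hf2]; ring
  have step2 : Real.log ((b*(φ*q)+a)/(φ*q+1)) - Real.log ((b*q+a)/(q+1))
      ≤ 2 * Real.log ((1+f*g)/(f+g)) := by
    have hle : (b*(φ*q)+a)/(φ*q+1) ≤ (b*q+a)/(q+1) * ((1+f*g)/(f+g))^2 := by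
      rw [div_le_iff₀ (by linarith : (0:ℝ) < φ*q+1)]
      have e : (b*q+a)/(q+1) * ((1+f*g)/(f+g))^2 * (φ*q+1)
          = ((b*q+a)*(1+f*g)^2*(φ*q+1)) / ((q+1)*(f+g)^2) := by
        have h1 : (q+1:ℝ) ≠ 0 := by linarith
        have h2 : (f+g) ≠ 0 := hfg.ne'
        field_simp
      rw [e, le_div_iff₀ (by positivity)]
      exact hpoly
    have hlog := Real.log_le_log hX'pos hle
    rw [Real.log_mul hYpos.ne' (by positivity : ((1+f*g)/(f+g))^2 ≠ 0)] at hlog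
    have e2 : Real.log (((1+f*g)/(f+g))^2) = 2 * Real.log ((1+f*g)/(f+g)) := by
      rw [show ((1+f*g)/(f+g))^2 = ((1+f*g)/(f+g))^(2:ℕ) by norm_num, Real.log_pow]
      push_cast; ring
    linarith [hlog, e2.le]
  have step3 : 2 * Real.log ((1+f*g)/(f+g)) ≤ (f-1)/(f+1) * (Real.log b - Real.log a) := by
    have hWlog : Real.log ((1+f*g)/(f+g)) = Real.log (1+f*g) - Real.log (f+g) :=
      Real.log_div hfgpos.ne' hfg.ne'
    have hstar := star_ineq hf1 hg1
    have hglog : Real.log g = (Real.log b - Real.log a)/2 := by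
      rw [hgdef, Real.log_sqrt (by positivity), Real.log_div hb.ne' ha.ne']
    rw [hglog] at hstar
    rw [hWlog]
    linarith
  linarith

lemma main_ub {D : ℕ} (hD : 1 ≤ D) {A : Matrix (Fin D) (Fin D) ℝ} (hA : ∀ i j, 0 < A i j)
    {φ : ℝ} (hφ1 : 1 ≤ φ) (hmax : ∀ i j k l, A i k * A j l ≤ φ * (A j k * A i l))
    {x y : Fin D → ℝ} (hx : ∀ i, 0 < x i) (hy : ∀ i, 0 < y i) :
    dH (A.mulVec x) (A.mulVec y) ≤ (Real.sqrt φ - 1)/(Real.sqrt φ + 1) * dH x y := by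
  haveI : Nonempty (Fin D) := ⟨⟨0, hD⟩⟩
  have hr : ∀ i, 0 < x i / y i := fun i => div_pos (hx i) (hy i)
  obtain ⟨imax, himax⟩ := Finite.exists_max (fun i => x i / y i)
  obtain ⟨imin, himin⟩ := Finite.exists_min (fun i => x i / y i)
  obtain ⟨b, hbdef⟩ : ∃ b : ℝ, b = x imax / y imax := ⟨_, rfl⟩
  obtain ⟨a, hadef⟩ : ∃ a : ℝ, a = x imin / y imin := ⟨_, rfl⟩
  have himax' : ∀ i, x i / y i ≤ b := fun i => hbdef ▸ himax i
  have himin' : ∀ i, a ≤ x i / y i := fun i => hadef ▸ himin i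
  have ha : 0 < a := hadef ▸ hr imin
  have hb : 0 < b := hbdef ▸ hr imax
  have hab : a ≤ b := le_trans (himin' imax) (himax' imax)
  have hsup : (⨆ i, x i / y i) = b := hbdef ▸ iSup_eq_max himax
  have hinf : (⨅ i, x i / y i) = a := hadef ▸ iInf_eq_min himin
  have hdxy : dH x y = Real.log b - Real.log a := by
    rw [dH, hsup, hinf, Real.log_div hb.ne' ha.ne']
  have hc0 : 0 ≤ (Real.sqrt φ - 1)/(Real.sqrt φ + 1) := by
    have h1 : 1 ≤ Real.sqrt φ := Real.one_le_sqrt.mpr hφ1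
    apply div_nonneg <;> linarith
  by_cases hba : b ≤ a
  · -- degenerate case: x is a multiple of y
    have haeb : a = b := le_antisymm hab hba
    have hxy : x = fun i => a * y i := by
      funext i
      have h1 : x i / y i ≤ b := himax' i
      have h2 : a ≤ x i / y i := himin' i
      have h3 : x i / y i = a := le_antisymm (haeb ▸ h1) h2
      rw [← h3, div_mul_cancel₀ _ (hy i).ne']
    have hmv : A.mulVec x = fun i => a * A.mulVec y i := by
      rw [hxy, show (fun i => a * y i) = a • y from rfl, Matrix.mulVec_smul]
      rfl
    rw [hmv, dH_smul_self ha (fun i => mulVec_pos' hA hy i), hdxy, haeb]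
    simp
  · push_neg at hba
    obtain ⟨u, hudef⟩ : ∃ u : Fin D → ℝ, u = fun i => x i - a * y i := ⟨_, rfl⟩
    obtain ⟨v, hvdef⟩ : ∃ v : Fin D → ℝ, v = fun i => b * y i - x i := ⟨_, rfl⟩
    have hu : ∀ i, 0 ≤ u i := by
      intro i
      have h1 := (le_div_iff₀ (hy i)).mp (himin' i)
      rw [hudef]; dsimp only; linarith
    have hv : ∀ i, 0 ≤ v i := by
      intro i
      have h1 := (div_le_iff₀ (hy i)).mp (himax' i)
      rw [hvdef]; dsimp only; linarith
    have hximax : x imax = b * y imax := by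
      rw [hbdef, div_mul_cancel₀ _ (hy imax).ne']
    have hximin : x imin = a * y imin := by
      rw [hadef, div_mul_cancel₀ _ (hy imin).ne']
    have humax : 0 < u imax := by
      rw [hudef]; dsimp only; rw [hximax]
      nlinarith [hy imax]
    have hvmin : 0 < v imin := by
      rw [hvdef]; dsimp only; rw [hximin]
      nlinarith [hy imin]
    have hAu : ∀ i, 0 < A.mulVec u i := fun i => mulVec_pos hA hu humax i
    have hAv : ∀ i, 0 < A.mulVec v i := fun i => mulVec_pos hA hv hvmin i
    obtain ⟨p, hpdef⟩ : ∃ p : Fin D → ℝ, p = fun i => A.mulVec u i / A.mulVec v i := ⟨_, rfl⟩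
    have hp : ∀ i, 0 < p i := by
      intro i; rw [hpdef]; exact div_pos (hAu i) (hAv i)
    obtain ⟨jmax, hjmax⟩ := Finite.exists_max p
    obtain ⟨jmin, hjmin⟩ := Finite.exists_min p
    have hPq : p jmax ≤ φ * p jmin := by
      have hq := quasi_bound hA hmax hu hv jmax jmin
      rw [hpdef]
      dsimp only
      rw [div_le_iff₀ (hAv jmax)]
      have e : φ * (A.mulVec u jmin / A.mulVec v jmin) * A.mulVec v jmax
          = φ * (A.mulVec u jmin * A.mulVec v jmax) / A.mulVec v jmin := by
        field_simp
      rw [e, le_div_iff₀ (hAv jmin)]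
      linarith [hq]
    have hbane : b - a ≠ 0 := by linarith
    have ebx : ∀ i, b * A.mulVec u i + a * A.mulVec v i = (b - a) * A.mulVec x i := by
      intro i
      have e1 : b • u + a • v = (b - a) • x := by
        funext k
        simp only [Pi.add_apply, Pi.smul_apply, smul_eq_mul, hudef, hvdef]
        ring
      have e2 := congrArg (fun w => A.mulVec w i) e1
      simp only [Matrix.mulVec_add, Matrix.mulVec_smul, Pi.add_apply, Pi.smul_apply,
        smul_eq_mul] at e2
      exact e2
    have eby : ∀ i, A.mulVec u i + A.mulVec v i = (b - a) * A.mulVec y i := by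
      intro i
      have e1 : u + v = (b - a) • y := by
        funext k
        simp only [Pi.add_apply, Pi.smul_apply, smul_eq_mul, hudef, hvdef]
        ring
      have e2 := congrArg (fun w => A.mulVec w i) e1
      simp only [Matrix.mulVec_add, Matrix.mulVec_smul, Pi.add_apply, Pi.smul_apply,
        smul_eq_mul] at e2
      exact e2
    have hR : ∀ i, A.mulVec x i / A.mulVec y i = (b * p i + a)/(p i + 1) := by
      intro i
      have h1 : A.mulVec x i = (b * A.mulVec u i + a * A.mulVec v i)/(b-a) := by
        rw [ebx i]; field_simp
      have h2 : A.mulVec y i = (A.mulVec u i + A.mulVec v i)/(b-a) := by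
        rw [eby i]; field_simp
      rw [h1, h2, div_div_div_comm, div_self hbane, div_one, hpdef]
      dsimp only
      have hAvne := (hAv i).ne'
      have hsum : A.mulVec u i + A.mulVec v i ≠ 0 := by
        have h3 := hAu i; have h4 := hAv i; intro h; linarith
      field_simp
    have hRmax : ∀ i, A.mulVec x i / A.mulVec y i ≤ A.mulVec x jmax / A.mulVec y jmax := by
      intro i
      rw [hR i, hR jmax]
      exact mobius_mono ha hab (hp i).le (hjmax i)
    have hRmin : ∀ i, A.mulVec x jmin / A.mulVec y jmin ≤ A.mulVec x i / A.mulVec y i := by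
      intro i
      rw [hR i, hR jmin]
      exact mobius_mono ha hab (hp jmin).le (hjmin i)
    have hsupR : (⨆ i, A.mulVec x i / A.mulVec y i) = (b * p jmax + a)/(p jmax + 1) := by
      rw [← hR jmax]; exact iSup_eq_max hRmax
    have hinfR : (⨅ i, A.mulVec x i / A.mulVec y i) = (b * p jmin + a)/(p jmin + 1) := by
      rw [← hR jmin]; exact iInf_eq_min hRmin
    have hXpos : 0 < (b * p jmax + a)/(p jmax + 1) := mobius_pos ha hb (hp jmax).le
    have hYpos : 0 < (b * p jmin + a)/(p jmin + 1) := mobius_pos ha hb (hp jmin).le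
    have hdA : dH (A.mulVec x) (A.mulVec y)
        = Real.log ((b * p jmax + a)/(p jmax + 1)) - Real.log ((b * p jmin + a)/(p jmin + 1)) := by
      rw [dH, hsupR, hinfR, Real.log_div hXpos.ne' hYpos.ne']
    rw [hdA, hdxy]
    exact chain_ineq hφ1 ha hab (hp jmax) (hp jmin) hPq


/-- The projective diameter `Δ(A) = sup {d_H(Au, Av) : u, v ≻ 0}`. -/
noncomputable def projDiam {D : ℕ} (A : Matrix (Fin D) (Fin D) ℝ) : ℝ :=
  sSup {d : ℝ | ∃ u v : Fin D → ℝ, (∀ i, 0 < u i) ∧ (∀ i, 0 < v i) ∧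
    d = dH (A.mulVec u) (A.mulVec v)}

lemma diam_eq {D : ℕ} (hD : 1 ≤ D) {A : Matrix (Fin D) (Fin D) ℝ} (hA : ∀ i j, 0 < A i j)
    {φ : ℝ} (hφ1 : 1 ≤ φ) (i0 j0 k0 l0 : Fin D)
    (hφdef : φ = A i0 k0 * A j0 l0 / (A j0 k0 * A i0 l0))
    (hmax : ∀ i j k l, A i k * A j l ≤ φ * (A j k * A i l)) :
    projDiam A = Real.log φ := by
  haveI : Nonempty (Fin D) := ⟨⟨0, hD⟩⟩
  set S : Set ℝ := {d : ℝ | ∃ u v : Fin D → ℝ, (∀ i, 0 < u i) ∧ (∀ i, 0 < v i) ∧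
    d = dH (A.mulVec u) (A.mulVec v)} with hSdef
  have hφ0 : 0 < φ := by linarith
  have hub : ∀ d ∈ S, d ≤ Real.log φ := by
    rintro d ⟨u, v, hu, hv, rfl⟩
    have hAu : ∀ i, 0 < A.mulVec u i := fun i => mulVec_pos' hA hu i
    have hAv : ∀ i, 0 < A.mulVec v i := fun i => mulVec_pos' hA hv i
    have hr : ∀ i, 0 < A.mulVec u i / A.mulVec v i := fun i => div_pos (hAu i) (hAv i)
    obtain ⟨imax, himax⟩ := Finite.exists_max (fun i => A.mulVec u i / A.mulVec v i)
    obtain ⟨imin, himin⟩ := Finite.exists_min (fun i => A.mulVec u i / A.mulVec v i)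
    have hsup := iSup_eq_max (f := fun i => A.mulVec u i / A.mulVec v i) himax
    have hinf := iInf_eq_min (f := fun i => A.mulVec u i / A.mulVec v i) himin
    rw [dH, hsup, hinf, Real.log_div (hr imax).ne' (hr imin).ne']
    have hq := quasi_bound hA hmax (fun k => (hu k).le) (fun k => (hv k).le) imax imin
    have hratio : A.mulVec u imax / A.mulVec v imax ≤ φ * (A.mulVec u imin / A.mulVec v imin) := by
      rw [div_le_iff₀ (hAv imax)]
      have e : φ * (A.mulVec u imin / A.mulVec v imin) * A.mulVec v imax
          = φ * (A.mulVec u imin * A.mulVec v imax) / A.mulVec v imin := by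
        field_simp
      rw [e, le_div_iff₀ (hAv imin)]
      linarith
    have hlog := Real.log_le_log (hr imax) hratio
    rw [Real.log_mul hφ0.ne' (hr imin).ne'] at hlog
    linarith
  have hone : (0:ℝ) ∈ S := by
    refine ⟨(fun _ => 1), (fun _ => 1), fun i => one_pos, fun i => one_pos, ?_⟩
    have h1 : ∀ i, 0 < A.mulVec (fun _ => (1:ℝ)) i := fun i => mulVec_pos' hA (fun _ => one_pos) i
    have e : ∀ i, A.mulVec (fun _ => (1:ℝ)) i / A.mulVec (fun _ => (1:ℝ)) i = 1 :=
      fun i => div_self (h1 i).ne'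
    rw [dH]
    simp only [e]
    rw [ciSup_const, ciInf_const, div_one, Real.log_one]
  have hbdd : BddAbove S := ⟨Real.log φ, fun d hd => hub d hd⟩
  apply le_antisymm (csSup_le ⟨0, hone⟩ hub)
  -- lower bound via limit
  set Srow : Fin D → ℝ := fun i => ∑ m, A i m with hSrow
  have hE : ∀ ε : ℝ, 0 < ε →
      Real.log ((A i0 k0 + ε * Srow i0)/(A i0 l0 + ε * Srow i0))
        - Real.log ((A j0 k0 + ε * Srow j0)/(A j0 l0 + ε * Srow j0)) ≤ sSup S := by
    intro ε hε
    set u : Fin D → ℝ := fun m => (if m = k0 then (1:ℝ) else 0) + ε with hudef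
    set v : Fin D → ℝ := fun m => (if m = l0 then (1:ℝ) else 0) + ε with hvdef
    have hu : ∀ i, 0 < u i := by
      intro i; rw [hudef]; dsimp only; split <;> linarith
    have hv : ∀ i, 0 < v i := by
      intro i; rw [hvdef]; dsimp only; split <;> linarith
    have hmem : dH (A.mulVec u) (A.mulVec v) ∈ S := ⟨u, v, hu, hv, rfl⟩
    have hle := le_csSup hbdd hmem
    have hAu : ∀ i, 0 < A.mulVec u i := fun i => mulVec_pos' hA hu i
    have hAv : ∀ i, 0 < A.mulVec v i := fun i => mulVec_pos' hA hv i
    have hpair := dH_ge_pair hAu hAv i0 j0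
    have eu : ∀ i, A.mulVec u i = A i k0 + ε * Srow i := fun i => mulVec_ind k0 i
    have ev : ∀ i, A.mulVec v i = A i l0 + ε * Srow i := fun i => mulVec_ind l0 i
    rw [eu i0, ev i0, eu j0, ev j0] at hpair
    linarith
  have hSrowpos : ∀ i, 0 < Srow i := by
    intro i
    exact Finset.sum_pos (fun m _ => hA i m) ⟨⟨0, hD⟩, Finset.mem_univ _⟩
  have htend : Filter.Tendsto (fun ε : ℝ =>
      Real.log ((A i0 k0 + ε * Srow i0)/(A i0 l0 + ε * Srow i0))
        - Real.log ((A j0 k0 + ε * Srow j0)/(A j0 l0 + ε * Srow j0)))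
      (nhdsWithin 0 (Set.Ioi 0))
      (nhds (Real.log (A i0 k0 / A i0 l0) - Real.log (A j0 k0 / A j0 l0))) := by
    have t1 := tendsto_logratio (s1 := Srow i0) (s2 := Srow i0) (hA i0 k0) (hA i0 l0)
    have t2 := tendsto_logratio (s1 := Srow j0) (s2 := Srow j0) (hA j0 k0) (hA j0 l0)
    exact t1.sub t2
  have hval : Real.log (A i0 k0 / A i0 l0) - Real.log (A j0 k0 / A j0 l0) = Real.log φ := by
    rw [hφdef, Real.log_div (hA i0 k0).ne' (hA i0 l0).ne',
      Real.log_div (hA j0 k0).ne' (hA j0 l0).ne',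
      Real.log_div (mul_pos (hA i0 k0) (hA j0 l0)).ne' (mul_pos (hA j0 k0) (hA i0 l0)).ne',
      Real.log_mul (hA i0 k0).ne' (hA j0 l0).ne',
      Real.log_mul (hA j0 k0).ne' (hA i0 l0).ne']
    ring
  rw [← hval]
  refine le_of_tendsto htend ?_
  filter_upwards [self_mem_nhdsWithin] with ε hε
  exact hE ε hε


/-- The contraction ratio
`k(A) = inf {λ ≥ 0 : d_H(Ax, Ay) ≤ λ d_H(x,y) for all x, y ≻ 0}`. -/
noncomputable def contrRatio {D : ℕ} (A : Matrix (Fin D) (Fin D) ℝ) : ℝ :=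
  sInf {l : ℝ | 0 ≤ l ∧ ∀ x y : Fin D → ℝ, (∀ i, 0 < x i) → (∀ i, 0 < y i) →
    dH (A.mulVec x) (A.mulVec y) ≤ l * dH x y}

lemma contr_lb {D : ℕ} (hD : 1 ≤ D) {A : Matrix (Fin D) (Fin D) ℝ} (hA : ∀ i j, 0 < A i j)
    {φ : ℝ} (hφ1 : 1 ≤ φ) (i0 j0 k0 l0 : Fin D)
    (hφdef : φ = A i0 k0 * A j0 l0 / (A j0 k0 * A i0 l0))
    {l : ℝ} (hl0 : 0 ≤ l)
    (hl : ∀ x y : Fin D → ℝ, (∀ i, 0 < x i) → (∀ i, 0 < y i) →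
      dH (A.mulVec x) (A.mulVec y) ≤ l * dH x y) :
    (Real.sqrt φ - 1)/(Real.sqrt φ + 1) ≤ l := by
  haveI : Nonempty (Fin D) := ⟨⟨0, hD⟩⟩
  obtain ⟨f, hfdef⟩ : ∃ f : ℝ, f = Real.sqrt φ := ⟨_, rfl⟩
  rw [← hfdef]
  have hf1 : 1 ≤ f := hfdef ▸ Real.one_le_sqrt.mpr hφ1
  have hf2 : f^2 = φ := hfdef ▸ Real.sq_sqrt (by linarith)
  rcases eq_or_lt_of_le hf1 with heq | hflt
  · rw [← heq]
    simpa using hl0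
  · -- Step A
    have hf0 : (0:ℝ) < f := by linarith
    have stepA : ∀ g : ℝ, 1 < g →
        Real.log (1+f*g) - Real.log (f+g) ≤ l * Real.log g := by
      intro g hg
      have hg0 : (0:ℝ) < g := by linarith
      have hfg : (0:ℝ) < f + g := by linarith
      have hfgpos : (0:ℝ) < 1 + f*g := by nlinarith
      obtain ⟨σ, hσdef⟩ : ∃ σ : ℝ, σ = A j0 l0 / (f*g*A j0 k0) := ⟨_, rfl⟩
      have hσ : 0 < σ := by
        rw [hσdef]
        exact div_pos (hA j0 l0) (mul_pos (mul_pos hf0 hg0) (hA j0 k0))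
      obtain ⟨Srow, hSrow⟩ : ∃ S : Fin D → ℝ, S = fun i => ∑ m, A i m := ⟨_, rfl⟩
      have hSrowpos : ∀ i, 0 < Srow i := by
        intro i; rw [hSrow]
        exact Finset.sum_pos (fun m _ => hA i m) ⟨⟨0, hD⟩, Finset.mem_univ _⟩
      have hprod2 : A j0 l0 * A i0 k0 = f^2 * (A j0 k0 * A i0 l0) := by
        have hne : A j0 k0 * A i0 l0 ≠ 0 := (mul_pos (hA j0 k0) (hA i0 l0)).ne'
        have : A i0 k0 * A j0 l0 = φ * (A j0 k0 * A i0 l0) := by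
          rw [hφdef, div_mul_cancel₀ _ hne]
        rw [hf2]; linarith [this]
      have hσi0 : σ * A i0 k0 = (f/g) * A i0 l0 := by
        rw [hσdef, div_mul_eq_mul_div, hprod2]
        field_simp [hf0.ne', hg0.ne', (hA j0 k0).ne']
      have hσj0 : σ * A j0 k0 = (1/(f*g)) * A j0 l0 := by
        rw [hσdef]
        field_simp [hf0.ne', hg0.ne', (hA j0 k0).ne']
      -- the inequality for each ε > 0
      have hEineq : ∀ ε : ℝ, 0 < ε →
          Real.log ((g^2*(σ*(A i0 k0 + ε * Srow i0)) + (A i0 l0 + ε * Srow i0))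
              / ((σ*(A i0 k0 + ε * Srow i0)) + (A i0 l0 + ε * Srow i0)))
            - Real.log ((g^2*(σ*(A j0 k0 + ε * Srow j0)) + (A j0 l0 + ε * Srow j0))
              / ((σ*(A j0 k0 + ε * Srow j0)) + (A j0 l0 + ε * Srow j0)))
          ≤ l * (2 * Real.log g) := by
        intro ε hε
        obtain ⟨w1, hw1def⟩ : ∃ w : Fin D → ℝ, w = fun m => (if m = k0 then (1:ℝ) else 0) + ε :=
          ⟨_, rfl⟩
        obtain ⟨w2, hw2def⟩ : ∃ w : Fin D → ℝ, w = fun m => (if m = l0 then (1:ℝ) else 0) + ε :=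
          ⟨_, rfl⟩
        obtain ⟨u, hudef⟩ : ∃ u : Fin D → ℝ, u = fun m => σ * w1 m := ⟨_, rfl⟩
        obtain ⟨x, hxdef⟩ : ∃ x : Fin D → ℝ, x = fun i => g^2 * u i + w2 i := ⟨_, rfl⟩
        obtain ⟨y, hydef⟩ : ∃ y : Fin D → ℝ, y = fun i => u i + w2 i := ⟨_, rfl⟩
        have hw1 : ∀ i, 0 < w1 i := by
          intro i; rw [hw1def]; dsimp only; split <;> linarith
        have hw2 : ∀ i, 0 < w2 i := by
          intro i; rw [hw2def]; dsimp only; split <;> linarith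
        have hu : ∀ i, 0 < u i := by
          intro i; rw [hudef]; exact mul_pos hσ (hw1 i)
        have hg21 : (1:ℝ) ≤ g^2 := by nlinarith
        have hx : ∀ i, 0 < x i := by
          intro i; rw [hxdef]; dsimp only
          nlinarith [hu i, hw2 i]
        have hy : ∀ i, 0 < y i := by
          intro i; rw [hydef]; dsimp only
          linarith [hu i, hw2 i]
        -- dH x y ≤ 2 log g
        have hdxy : dH x y ≤ 2 * Real.log g := by
          have hb1 : ∀ i, 1 ≤ x i / y i := by
            intro i
            rw [le_div_iff₀ (hy i), hxdef, hydef]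
            dsimp only
            nlinarith [hu i, hw2 i]
          have hb2 : ∀ i, x i / y i ≤ g^2 := by
            intro i
            rw [div_le_iff₀ (hy i), hxdef, hydef]
            dsimp only
            nlinarith [hu i, hw2 i]
          have hb := dH_le_of_bounds one_pos hb1 hb2
          rw [Real.log_one, sub_zero] at hb
          calc dH x y ≤ Real.log (g^2) := hb
          _ = 2 * Real.log g := by
            rw [show g^2 = g^(2:ℕ) by norm_num, Real.log_pow]; push_cast; ring
        -- main inequality applied
        have hmain := hl x y hx hy
        have hAx : ∀ i, 0 < A.mulVec x i := fun i => mulVec_pos' hA hx i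
        have hAy : ∀ i, 0 < A.mulVec y i := fun i => mulVec_pos' hA hy i
        have hpair := dH_ge_pair hAx hAy i0 j0
        -- compute mulVec entries
        have hw1e : ∀ i, A.mulVec w1 i = A i k0 + ε * Srow i := by
          intro i; rw [hw1def, hSrow]; exact mulVec_ind k0 i
        have hw2e : ∀ i, A.mulVec w2 i = A i l0 + ε * Srow i := by
          intro i; rw [hw2def, hSrow]; exact mulVec_ind l0 i
        have hue : ∀ i, A.mulVec u i = σ * (A i k0 + ε * Srow i) := by
          intro i
          have e1 : u = σ • w1 := by
            funext m; rw [hudef, Pi.smul_apply, smul_eq_mul]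
          rw [e1, Matrix.mulVec_smul, Pi.smul_apply, smul_eq_mul, hw1e i]
        have hxe : ∀ i, A.mulVec x i
            = g^2 * (σ * (A i k0 + ε * Srow i)) + (A i l0 + ε * Srow i) := by
          intro i
          have e1 : x = g^2 • u + w2 := by
            funext m; rw [hxdef, Pi.add_apply, Pi.smul_apply, smul_eq_mul]
          rw [e1, Matrix.mulVec_add, Matrix.mulVec_smul, Pi.add_apply, Pi.smul_apply,
            smul_eq_mul, hue i, hw2e i]
        have hye : ∀ i, A.mulVec y i
            = (σ * (A i k0 + ε * Srow i)) + (A i l0 + ε * Srow i) := by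
          intro i
          have e1 : y = u + w2 := by
            funext m; rw [hydef, Pi.add_apply]
          rw [e1, Matrix.mulVec_add, Pi.add_apply, hue i, hw2e i]
        rw [hxe i0, hye i0, hxe j0, hye j0] at hpair
        have hstep : l * dH x y ≤ l * (2 * Real.log g) :=
          mul_le_mul_of_nonneg_left hdxy hl0
        linarith
      -- take the limit ε → 0⁺
      have hq1 : 0 < σ * A i0 k0 := mul_pos hσ (hA i0 k0)
      have hq2 : 0 < σ * A j0 k0 := mul_pos hσ (hA j0 k0)
      have hg2pos : (0:ℝ) < g^2 := by positivity
      have hc1 : 0 < g^2*(σ*A i0 k0) + A i0 l0 :=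
        add_pos (mul_pos hg2pos hq1) (hA i0 l0)
      have hc2 : 0 < σ*A i0 k0 + A i0 l0 := add_pos hq1 (hA i0 l0)
      have hc3 : 0 < g^2*(σ*A j0 k0) + A j0 l0 :=
        add_pos (mul_pos hg2pos hq2) (hA j0 l0)
      have hc4 : 0 < σ*A j0 k0 + A j0 l0 := add_pos hq2 (hA j0 l0)
      have htend : Filter.Tendsto (fun ε : ℝ =>
          Real.log (((g^2*(σ*A i0 k0) + A i0 l0) + ε * (g^2*σ*Srow i0 + Srow i0))
              / ((σ*A i0 k0 + A i0 l0) + ε * (σ*Srow i0 + Srow i0)))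
            - Real.log (((g^2*(σ*A j0 k0) + A j0 l0) + ε * (g^2*σ*Srow j0 + Srow j0))
              / ((σ*A j0 k0 + A j0 l0) + ε * (σ*Srow j0 + Srow j0))))
          (nhdsWithin 0 (Set.Ioi 0))
          (nhds (Real.log ((g^2*(σ*A i0 k0) + A i0 l0)/(σ*A i0 k0 + A i0 l0))
            - Real.log ((g^2*(σ*A j0 k0) + A j0 l0)/(σ*A j0 k0 + A j0 l0)))) :=
        (tendsto_logratio hc1 hc2).sub (tendsto_logratio hc3 hc4)
      have hlim : Real.log ((g^2*(σ*A i0 k0) + A i0 l0)/(σ*A i0 k0 + A i0 l0))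
          - Real.log ((g^2*(σ*A j0 k0) + A j0 l0)/(σ*A j0 k0 + A j0 l0))
          ≤ l * (2 * Real.log g) := by
        refine le_of_tendsto htend ?_
        filter_upwards [self_mem_nhdsWithin] with ε hε
        have hEq := hEineq ε hε
        calc Real.log (((g^2*(σ*A i0 k0) + A i0 l0) + ε * (g^2*σ*Srow i0 + Srow i0))
              / ((σ*A i0 k0 + A i0 l0) + ε * (σ*Srow i0 + Srow i0)))
            - Real.log (((g^2*(σ*A j0 k0) + A j0 l0) + ε * (g^2*σ*Srow j0 + Srow j0))
              / ((σ*A j0 k0 + A j0 l0) + ε * (σ*Srow j0 + Srow j0)))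
            = Real.log ((g^2*(σ*(A i0 k0 + ε * Srow i0)) + (A i0 l0 + ε * Srow i0))
              / ((σ*(A i0 k0 + ε * Srow i0)) + (A i0 l0 + ε * Srow i0)))
            - Real.log ((g^2*(σ*(A j0 k0 + ε * Srow j0)) + (A j0 l0 + ε * Srow j0))
              / ((σ*(A j0 k0 + ε * Srow j0)) + (A j0 l0 + ε * Srow j0))) := by
              congr 2 <;> ring
          _ ≤ l * (2 * Real.log g) := hEq
      -- identify the limit value
      have hval1 : (g^2*(σ*A i0 k0) + A i0 l0)/(σ*A i0 k0 + A i0 l0)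
          = g*(1+f*g)/(f+g) := by
        rw [hσi0]
        exact ratio_val1 hf0 hg0 (hA i0 l0)
      have hval2 : (g^2*(σ*A j0 k0) + A j0 l0)/(σ*A j0 k0 + A j0 l0)
          = g*(f+g)/(1+f*g) := by
        rw [hσj0]
        exact ratio_val2 hf0 hg0 (hA j0 l0)
      rw [hval1, hval2] at hlim
      rw [Real.log_div (by positivity) hfg.ne', Real.log_mul hg0.ne' hfgpos.ne',
        Real.log_div (by positivity) hfgpos.ne', Real.log_mul hg0.ne' hfg.ne'] at hlim
      linarith
    -- Step B
    have hev : ∀ᶠ g in nhdsWithin (1:ℝ) (Set.Ioi 1),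
        (Real.log (1+f*g) - Real.log (f+g)) / Real.log g ≤ l := by
      filter_upwards [self_mem_nhdsWithin] with g hg
      have hg1 : (1:ℝ) < g := hg
      have hlg : 0 < Real.log g := Real.log_pos hg1
      rw [div_le_iff₀ hlg]
      exact stepA g hg1
    exact le_of_tendsto (slope_lim hflt) hev

theorem birkhoff_contraction_theorem
    (D : ℕ) (hD : 1 ≤ D) (A : Matrix (Fin D) (Fin D) ℝ)
    (hA : ∀ i j, 0 < A i j) :
    contrRatio A = Real.tanh (projDiam A / 4) ∧
    Real.tanh (projDiam A / 4) < 1 ∧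
    ∀ x y : Fin D → ℝ, (∀ i, 0 < x i) → (∀ i, 0 < y i) →
      dH (A.mulVec x) (A.mulVec y) ≤ Real.tanh (projDiam A / 4) * dH x y := by
  haveI : Nonempty (Fin D) := ⟨⟨0, hD⟩⟩
  obtain ⟨⟨i0, j0, k0, l0⟩, hcr⟩ := Finite.exists_max
    (fun t : Fin D × Fin D × Fin D × Fin D =>
      A t.1 t.2.2.1 * A t.2.1 t.2.2.2 / (A t.2.1 t.2.2.1 * A t.1 t.2.2.2))
  obtain ⟨φ, hφdef⟩ : ∃ φ : ℝ, φ = A i0 k0 * A j0 l0 / (A j0 k0 * A i0 l0) := ⟨_, rfl⟩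
  have hmax' : ∀ i j k l : Fin D, A i k * A j l / (A j k * A i l) ≤ φ := by
    intro i j k l
    rw [hφdef]
    exact hcr (i, j, k, l)
  have hφ1 : 1 ≤ φ := by
    have h := hmax' i0 i0 k0 k0
    rwa [div_self (mul_pos (hA i0 k0) (hA i0 k0)).ne'] at h
  have hφ0 : 0 < φ := by linarith
  have hmax : ∀ i j k l : Fin D, A i k * A j l ≤ φ * (A j k * A i l) := by
    intro i j k l
    have h := hmax' i j k l
    rwa [div_le_iff₀ (mul_pos (hA j k) (hA i l))] at h
  have hdiam : projDiam A = Real.log φ := diam_eq hD hA hφ1 i0 j0 k0 l0 hφdef hmax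
  have htanh : Real.tanh (projDiam A / 4) = (Real.sqrt φ - 1)/(Real.sqrt φ + 1) := by
    rw [hdiam, tanh_log_div_four hφ0]
  have hf1 : 1 ≤ Real.sqrt φ := Real.one_le_sqrt.mpr hφ1
  have hc0 : 0 ≤ (Real.sqrt φ - 1)/(Real.sqrt φ + 1) :=
    div_nonneg (by linarith) (by linarith)
  have hmem : (Real.sqrt φ - 1)/(Real.sqrt φ + 1) ∈
      {l : ℝ | 0 ≤ l ∧ ∀ x y : Fin D → ℝ, (∀ i, 0 < x i) → (∀ i, 0 < y i) →
        dH (A.mulVec x) (A.mulVec y) ≤ l * dH x y} :=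
    ⟨hc0, fun x y hx hy => main_ub hD hA hφ1 hmax hx hy⟩
  refine ⟨?_, ?_, ?_⟩
  · rw [htanh]
    apply le_antisymm
    · exact csInf_le ⟨0, fun l hl => hl.1⟩ hmem
    · exact le_csInf ⟨_, hmem⟩
        (fun l hl => contr_lb hD hA hφ1 i0 j0 k0 l0 hφdef hl.1 hl.2)
  · rw [htanh, div_lt_one (by linarith)]
    linarith
  · intro x y hx hy
    rw [htanh]
    exact main_ub hD hA hφ1 hmax hx hy
end

section
/- The metric space E := ({x ∈ ℝ^D : all entries of x are strictly positive and ‖x‖ = 1}, d_H) is complete: every sequence of unit-norm strictly positive vectors that is Cauchy with respect to the Hilbert metric d_H converges in the metric d_H to a unit-norm vector with all entries strictly positive. -/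
/-- The Euclidean norm on `ℝ^D`. -/
noncomputable def enorm {D : ℕ} (x : Fin D → ℝ) : ℝ :=
  Real.sqrt (∑ i, x i ^ 2)

lemma sup_attained {D : ℕ} [Nonempty (Fin D)] (f : Fin D → ℝ) : ∃ i, (⨆ j, f j) = f i := by
  obtain ⟨i, hi⟩ := Finite.exists_max f
  exact ⟨i, le_antisymm (ciSup_le hi) (le_ciSup (Finite.bddAbove_range f) i)⟩

lemma inf_attained {D : ℕ} [Nonempty (Fin D)] (f : Fin D → ℝ) : ∃ i, (⨅ j, f j) = f i := by
  obtain ⟨i, hi⟩ := Finite.exists_min f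
  exact ⟨i, le_antisymm (ciInf_le (Finite.bddBelow_range f) i) (le_ciInf hi)⟩

lemma coord_le_one {D : ℕ} {x : Fin D → ℝ} (hx : ∀ i, 0 < x i) (hn : _root_.enorm x = 1) (i : Fin D) :
    x i ≤ 1 := by
  have h1 : x i = Real.sqrt (x i ^ 2) := (Real.sqrt_sq (hx i).le).symm
  rw [h1, ← hn, _root_.enorm]
  exact Real.sqrt_le_sqrt (Finset.single_le_sum (f := fun j => x j ^ 2)
    (fun j _ => sq_nonneg _) (Finset.mem_univ i))

lemma exists_le {D : ℕ} [Nonempty (Fin D)] {x y : Fin D → ℝ} (hx : ∀ i, 0 < x i)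
    (hy : ∀ i, 0 < y i) (hnx : _root_.enorm x = 1) (hny : _root_.enorm y = 1) : ∃ i, x i ≤ y i := by
  by_contra h
  push_neg at h
  have hsum : ∑ i, y i ^ 2 < ∑ i, x i ^ 2 :=
    Finset.sum_lt_sum_of_nonempty Finset.univ_nonempty
      (fun i _ => pow_lt_pow_left₀ (h i) (hy i).le two_ne_zero)
  have : _root_.enorm y < _root_.enorm x := Real.sqrt_lt_sqrt (Finset.sum_nonneg fun i _ => sq_nonneg _) hsum
  rw [hnx, hny] at this
  exact lt_irrefl 1 this

lemma key_bound {D : ℕ} [Nonempty (Fin D)] {x y : Fin D → ℝ} {ε : ℝ}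
    (hx : ∀ i, 0 < x i) (hy : ∀ i, 0 < y i)
    (hnx : _root_.enorm x = 1) (hny : _root_.enorm y = 1) (h : dH x y < ε) (i : Fin D) :
    Real.exp (-ε) * y i < x i ∧ x i < Real.exp ε * y i := by
  set f : Fin D → ℝ := fun i => x i / y i with hf
  have hfpos : ∀ i, 0 < f i := fun i => div_pos (hx i) (hy i)
  obtain ⟨j, hj⟩ := inf_attained f
  have ht : 0 < ⨅ k, f k := hj ▸ hfpos j
  obtain ⟨i₁, hi₁⟩ := exists_le hx hy hnx hny
  obtain ⟨i₂, hi₂⟩ := exists_le hy hx hny hnx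
  have ht1 : (⨅ k, f k) ≤ 1 :=
    le_trans (ciInf_le (Finite.bddBelow_range f) i₁) (div_le_one_of_le₀ hi₁ (hy i₁).le)
  have hs1 : 1 ≤ ⨆ k, f k :=
    le_trans ((one_le_div (hy i₂)).2 hi₂) (le_ciSup (Finite.bddAbove_range f) i₂)
  have hs : 0 < ⨆ k, f k := lt_of_lt_of_le one_pos hs1
  have hdiv : (⨆ k, f k) / ⨅ k, f k < Real.exp ε := by
    have hd := h
    rw [dH] at hd
    calc (⨆ k, f k) / ⨅ k, f k = Real.exp (Real.log ((⨆ k, f k) / ⨅ k, f k)) :=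
          (Real.exp_log (div_pos hs ht)).symm
      _ < Real.exp ε := Real.exp_lt_exp.2 hd
  have hsup_lt : (⨆ k, f k) < Real.exp ε * ⨅ k, f k := by
    rw [div_lt_iff₀ ht] at hdiv; linarith
  constructor
  · -- exp(-ε) * y i < x i
    have h1 : Real.exp (-ε) < ⨅ k, f k := by
      have : Real.exp (-ε) * (⨆ k, f k) < ⨅ k, f k := by
        rw [Real.exp_neg]
        rw [inv_mul_lt_iff₀ (Real.exp_pos ε)]
        linarith
      calc Real.exp (-ε) = Real.exp (-ε) * 1 := (mul_one _).symm
        _ ≤ Real.exp (-ε) * ⨆ k, f k := by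
            exact mul_le_mul_of_nonneg_left hs1 (Real.exp_pos _).le
        _ < _ := this
    have h2 : Real.exp (-ε) < f i := lt_of_lt_of_le h1 (ciInf_le (Finite.bddBelow_range f) i)
    rw [lt_div_iff₀ (hy i)] at h2; linarith
    
  · have h1 : (⨆ k, f k) < Real.exp ε := by
      calc (⨆ k, f k) < Real.exp ε * ⨅ k, f k := hsup_lt
        _ ≤ Real.exp ε * 1 := mul_le_mul_of_nonneg_left ht1 (Real.exp_pos _).le
        _ = Real.exp ε := mul_one _
    have h2 : f i < Real.exp ε := lt_of_le_of_lt (le_ciSup (Finite.bddAbove_range f) i) h1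
    rw [div_lt_iff₀ (hy i)] at h2; linarith
/-- The metric space `E = (O⁺ ∩ U, d_H)` of unit-norm strictly positive vectors with the
Hilbert metric is complete. -/
theorem hilbert_metric_space_complete
    (D : ℕ) (hD : 1 ≤ D) (x : ℕ → Fin D → ℝ)
    (hpos : ∀ n i, 0 < x n i) (hnorm : ∀ n, _root_.enorm (x n) = 1)
    (hcauchy : ∀ ε : ℝ, 0 < ε → ∃ N : ℕ, ∀ m ≥ N, ∀ n ≥ N, dH (x m) (x n) < ε) :
    ∃ y : Fin D → ℝ, (∀ i, 0 < y i) ∧ _root_.enorm y = 1 ∧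
      Filter.Tendsto (fun n => dH (x n) y) Filter.atTop (nhds 0) := by
  haveI : Nonempty (Fin D) := ⟨⟨0, hD⟩⟩
  -- each coordinate is Cauchy
  have hC : ∀ i, CauchySeq (fun n => x n i) := by
    intro i
    rw [Metric.cauchySeq_iff]
    intro ε hε
    obtain ⟨N, hN⟩ := hcauchy (Real.log (1 + ε)) (Real.log_pos (by linarith))
    refine ⟨N, fun m hm n hn => ?_⟩
    have h1 := (key_bound (hpos m) (hpos n) (hnorm m) (hnorm n) (hN m hm n hn) i).2
    have h2 := (key_bound (hpos n) (hpos m) (hnorm n) (hnorm m) (hN n hn m hm) i).2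
    rw [Real.exp_log (by linarith : (0:ℝ) < 1 + ε)] at h1 h2
    have hle1 : x m i ≤ 1 := coord_le_one (hpos m) (hnorm m) i
    have hle2 : x n i ≤ 1 := coord_le_one (hpos n) (hnorm n) i
    have hp1 := hpos m i; have hp2 := hpos n i
    rw [Real.dist_eq, abs_sub_lt_iff]
    constructor <;> nlinarith
  choose y hy using fun i => cauchySeq_tendsto_of_complete (hC i)
  -- positivity of y
  obtain ⟨N₁, hN₁⟩ := hcauchy 1 one_pos
  have hypos : ∀ i, 0 < y i := by
    intro i
    have hlb : ∀ n ≥ N₁, Real.exp (-1) * x N₁ i ≤ x n i := fun n hn =>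
      (key_bound (hpos n) (hpos N₁) (hnorm n) (hnorm N₁) (hN₁ n hn N₁ le_rfl) i).1.le
    have : Real.exp (-1) * x N₁ i ≤ y i :=
      ge_of_tendsto (hy i) (Filter.eventually_atTop.2 ⟨N₁, hlb⟩)
    have := mul_pos (Real.exp_pos (-1)) (hpos N₁ i)
    linarith
  -- norm of y
  have hynorm : _root_.enorm y = 1 := by
    have htend : Filter.Tendsto (fun n => _root_.enorm (x n)) Filter.atTop (nhds (_root_.enorm y)) := by
      unfold _root_.enorm
      exact (Real.continuous_sqrt.tendsto _).comp
        (tendsto_finset_sum _ fun i _ => (hy i).pow 2)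
    have hconst : Filter.Tendsto (fun n => _root_.enorm (x n)) Filter.atTop (nhds 1) := by
      simp only [hnorm]; exact tendsto_const_nhds
    exact tendsto_nhds_unique htend hconst
  refine ⟨y, hypos, hynorm, ?_⟩
  -- convergence in dH
  rw [Metric.tendsto_atTop]
  intro ε hε
  obtain ⟨N, hN⟩ := hcauchy (ε/3) (by linarith)
  refine ⟨N, fun n hn => ?_⟩
  set f : Fin D → ℝ := fun i => x n i / y i with hf
  have hfpos : ∀ i, 0 < f i := fun i => div_pos (hpos n i) (hypos i)
  have hub : ∀ i, f i ≤ Real.exp (ε/3) := by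
    intro i
    have hxub : x n i ≤ Real.exp (ε/3) * y i := by
      refine ge_of_tendsto (((hy i).const_mul (Real.exp (ε/3)))) ?_
      refine Filter.eventually_atTop.2 ⟨N, fun m hm => ?_⟩
      exact (key_bound (hpos n) (hpos m) (hnorm n) (hnorm m) (hN n hn m hm) i).2.le
    rw [hf]; rw [div_le_iff₀ (hypos i)]; linarith
  have hlb : ∀ i, Real.exp (-(ε/3)) ≤ f i := by
    intro i
    have hxlb : Real.exp (-(ε/3)) * y i ≤ x n i := by
      refine le_of_tendsto (((hy i).const_mul (Real.exp (-(ε/3))))) ?_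
      refine Filter.eventually_atTop.2 ⟨N, fun m hm => ?_⟩
      exact (key_bound (hpos n) (hpos m) (hnorm n) (hnorm m) (hN n hn m hm) i).1.le
    rw [hf]; rw [le_div_iff₀ (hypos i)]; linarith
  obtain ⟨j, hj⟩ := inf_attained f
  have ht : 0 < ⨅ k, f k := hj ▸ hfpos j
  have hts : (⨅ k, f k) ≤ ⨆ k, f k :=
    le_trans (ciInf_le (Finite.bddBelow_range f) j) (le_ciSup (Finite.bddAbove_range f) j)
  have hs_ub : (⨆ k, f k) ≤ Real.exp (ε/3) := ciSup_le hub
  have ht_lb : Real.exp (-(ε/3)) ≤ ⨅ k, f k := le_ciInf hlb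
  have hdH_nonneg : 0 ≤ dH (x n) y := by
    rw [dH]
    exact Real.log_nonneg ((one_le_div ht).2 hts)
  have hdH_le : dH (x n) y ≤ 2 * (ε/3) := by
    rw [dH]
    have h1 : (⨆ k, f k) / ⨅ k, f k ≤ Real.exp (ε/3) / Real.exp (-(ε/3)) := by
      gcongr
    rw [← Real.exp_sub] at h1
    have h2 : ε/3 - -(ε/3) = 2 * (ε/3) := by ring
    rw [h2] at h1
    calc Real.log ((⨆ k, f k) / ⨅ k, f k) ≤ Real.log (Real.exp (2 * (ε/3))) :=
          Real.log_le_log (div_pos (lt_of_lt_of_le ht hts) ht) h1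
      _ = 2 * (ε/3) := Real.log_exp _
  rw [Real.dist_eq, sub_zero, abs_of_nonneg hdH_nonneg]
  linarith
end

section
/- Let A be a D×D real matrix with nonnegative entries that is primitive, i.e., there exists a positive integer h such that every entry of A^h is strictly positive. Then there exists a unique unit-norm strictly positive eigenvector x_f of A such that for every nonzero vector x_0 ∈ ℝ^D with nonnegative entries, the iterates A^n·x_0 converge in direction to x_f: for all n ≥ h the vector A^n·x_0 has strictly positive entries, d_H(A^n·x_0, x_f) → 0 as n → ∞, and the convergence rate is at least linear, i.e., there exist constants K ≥ 0 and 0 ≤ r < 1 such that d_H(A^n·x_0, x_f) ≤ K·r^n for all n ≥ h. -/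
set_option linter.unusedSectionVars false
set_option maxHeartbeats 1600000



namespace PF

variable {D : ℕ}

noncomputable def supR (x y : Fin D → ℝ) : ℝ := ⨆ i, x i / y i
noncomputable def infR (x y : Fin D → ℝ) : ℝ := ⨅ i, x i / y i
noncomputable def ER (x y : Fin D → ℝ) : ℝ := supR x y / infR x y

lemma dH_eq (x y : Fin D → ℝ) : dH x y = Real.log (ER x y) := rfl

section
variable [NeZero D]

lemma exists_sup (f : Fin D → ℝ) : ∃ i, (⨆ j, f j) = f i ∧ ∀ k, f k ≤ f i := by
  obtain ⟨i, hi⟩ := Finite.exists_max f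
  exact ⟨i, le_antisymm (ciSup_le hi) (le_ciSup (Set.finite_range f).bddAbove i), hi⟩

lemma exists_inf (f : Fin D → ℝ) : ∃ i, (⨅ j, f j) = f i ∧ ∀ k, f i ≤ f k := by
  obtain ⟨i, hi⟩ := Finite.exists_min f
  exact ⟨i, le_antisymm (ciInf_le (Set.finite_range f).bddBelow i) (le_ciInf hi), hi⟩

lemma le_sup (f : Fin D → ℝ) (i : Fin D) : f i ≤ ⨆ j, f j :=
  le_ciSup (Set.finite_range f).bddAbove i

lemma inf_le (f : Fin D → ℝ) (i : Fin D) : (⨅ j, f j) ≤ f i :=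
  ciInf_le (Set.finite_range f).bddBelow i

lemma sup_div_const (f : Fin D → ℝ) {c : ℝ} (hc : 0 < c) :
    (⨆ i, f i / c) = (⨆ i, f i) / c := by
  obtain ⟨i, hi, hall⟩ := exists_sup f
  rw [hi]
  exact le_antisymm (ciSup_le fun k => by gcongr; exact hall k) (le_sup (fun i => f i / c) i)

lemma inf_div_const (f : Fin D → ℝ) {c : ℝ} (hc : 0 < c) :
    (⨅ i, f i / c) = (⨅ i, f i) / c := by
  obtain ⟨i, hi, hall⟩ := exists_inf f
  rw [hi]
  exact le_antisymm (inf_le (fun i => f i / c) i) (le_ciInf fun k => by gcongr; exact hall k)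

lemma sup_const_mul (f : Fin D → ℝ) {c : ℝ} (hc : 0 < c) :
    (⨆ i, c * f i) = c * (⨆ i, f i) := by
  obtain ⟨i, hi, hall⟩ := exists_sup f
  rw [hi]
  exact le_antisymm (ciSup_le fun k => by gcongr; exact hall k) (le_sup (fun i => c * f i) i)

lemma inf_const_mul (f : Fin D → ℝ) {c : ℝ} (hc : 0 < c) :
    (⨅ i, c * f i) = c * (⨅ i, f i) := by
  obtain ⟨i, hi, hall⟩ := exists_inf f
  rw [hi]
  exact le_antisymm (inf_le (fun i => c * f i) i) (le_ciInf fun k => by gcongr; exact hall k)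

variable {x y : Fin D → ℝ}

lemma smul_apply' (c : ℝ) (x : Fin D → ℝ) (i : Fin D) : (c • x) i = c * x i := rfl

lemma infR_pos (hx : ∀ i, 0 < x i) (hy : ∀ i, 0 < y i) : 0 < infR x y := by
  obtain ⟨i, hi, -⟩ := exists_inf (fun i => x i / y i)
  rw [infR, hi]; exact div_pos (hx i) (hy i)

lemma infR_le_supR : infR x y ≤ supR x y := by
  have i : Fin D := Classical.arbitrary _
  rw [infR, supR]
  exact le_trans (inf_le (fun i => x i / y i) i) (le_sup (fun i => x i / y i) i)

lemma ER_ge_one (hx : ∀ i, 0 < x i) (hy : ∀ i, 0 < y i) : 1 ≤ ER x y :=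
  (one_le_div (infR_pos hx hy)).2 infR_le_supR

lemma supR_pos (hx : ∀ i, 0 < x i) (hy : ∀ i, 0 < y i) : 0 < supR x y :=
  lt_of_lt_of_le (infR_pos hx hy) infR_le_supR

lemma infR_mul_le (hy : ∀ i, 0 < y i) (i : Fin D) : infR x y * y i ≤ x i := by
  have h := inf_le (fun i => x i / y i) i
  calc infR x y * y i ≤ (x i / y i) * y i := mul_le_mul_of_nonneg_right h (hy i).le
    _ = x i := div_mul_cancel₀ _ (hy i).ne'

lemma le_supR_mul (hy : ∀ i, 0 < y i) (i : Fin D) : x i ≤ supR x y * y i := by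
  have h := le_sup (fun i => x i / y i) i
  calc x i = (x i / y i) * y i := (div_mul_cancel₀ _ (hy i).ne').symm
    _ ≤ supR x y * y i := mul_le_mul_of_nonneg_right h (hy i).le

lemma supR_le_of (hy : ∀ i, 0 < y i) {M : ℝ} (hM : ∀ i, x i ≤ M * y i) : supR x y ≤ M :=
  ciSup_le fun i => (div_le_iff₀ (hy i)).2 (by linarith [hM i])

lemma le_infR_of (hy : ∀ i, 0 < y i) {m : ℝ} (hm : ∀ i, m * y i ≤ x i) : m ≤ infR x y :=
  le_ciInf fun i => (le_div_iff₀ (hy i)).2 (hm i)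

lemma ER_smul_right (hx : ∀ i, 0 < x i) (hy : ∀ i, 0 < y i) {c : ℝ} (hc : 0 < c) :
    ER x (c • y) = ER x y := by
  have h1 : ∀ i, x i / (c • y) i = (x i / y i) / c := by
    intro i; show x i / (c * y i) = _; field_simp
  have hsup : supR x (c • y) = supR x y / c := by
    rw [supR, supR, ← sup_div_const (fun i => x i / y i) hc]
    exact iSup_congr h1
  have hinf : infR x (c • y) = infR x y / c := by
    rw [infR, infR, ← inf_div_const (fun i => x i / y i) hc]
    exact iInf_congr h1
  have hI := (infR_pos hx hy).ne'
  rw [ER, ER, hsup, hinf]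
  field_simp

lemma ER_smul_left (hx : ∀ i, 0 < x i) (hy : ∀ i, 0 < y i) {c : ℝ} (hc : 0 < c) :
    ER (c • x) y = ER x y := by
  have h1 : ∀ i, (c • x) i / y i = c * (x i / y i) := by
    intro i; show (c * x i) / y i = _; ring
  have hsup : supR (c • x) y = c * supR x y := by
    rw [supR, supR, ← sup_const_mul (fun i => x i / y i) hc]
    exact iSup_congr h1
  have hinf : infR (c • x) y = c * infR x y := by
    rw [infR, infR, ← inf_const_mul (fun i => x i / y i) hc]
    exact iInf_congr h1
  rw [ER, ER, hsup, hinf, mul_div_mul_left _ _ hc.ne']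


variable {A B : Matrix (Fin D) (Fin D) ℝ} {b c : ℝ} {z w u v : Fin D → ℝ}

lemma mulVec_apply' (A : Matrix (Fin D) (Fin D) ℝ) (x : Fin D → ℝ) (i : Fin D) :
    A.mulVec x i = ∑ j, A i j * x j := rfl

lemma mulVec_nonneg (hA : ∀ i j, 0 ≤ A i j) (hx : ∀ i, 0 ≤ x i) (i : Fin D) :
    0 ≤ A.mulVec x i := by
  rw [mulVec_apply']
  exact Finset.sum_nonneg fun j _ => mul_nonneg (hA i j) (hx j)

lemma mulVec_pos_of_rows (hA : ∀ i j, 0 ≤ A i j) (hrow : ∀ i, ∃ j, 0 < A i j)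
    (hx : ∀ i, 0 < x i) (i : Fin D) : 0 < A.mulVec x i := by
  obtain ⟨j, hj⟩ := hrow i
  rw [mulVec_apply']
  exact Finset.sum_pos' (fun k _ => mul_nonneg (hA i k) (hx k).le)
    ⟨j, Finset.mem_univ j, mul_pos hj (hx j)⟩

lemma pos_of_nonneg_ne_zero (hx : ∀ i, 0 ≤ x i) (hx0 : x ≠ 0) : ∃ j, 0 < x j := by
  obtain ⟨j, hj⟩ := Function.ne_iff.1 hx0
  exact ⟨j, lt_of_le_of_ne (hx j) (Ne.symm hj)⟩

lemma mulVec_pos_entries (hB : ∀ i j, 0 < B i j) (hx : ∀ i, 0 ≤ x i) (hx0 : x ≠ 0)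
    (i : Fin D) : 0 < B.mulVec x i := by
  obtain ⟨j, hj⟩ := pos_of_nonneg_ne_zero hx hx0
  rw [mulVec_apply']
  exact Finset.sum_pos' (fun k _ => mul_nonneg (hB i k).le (hx k))
    ⟨j, Finset.mem_univ j, mul_pos (hB i j) hj⟩

lemma mulVec_mono (hA : ∀ i j, 0 ≤ A i j) (hxy : ∀ i, x i ≤ y i) (i : Fin D) :
    A.mulVec x i ≤ A.mulVec y i := by
  rw [mulVec_apply', mulVec_apply']
  exact Finset.sum_le_sum fun j _ => mul_le_mul_of_nonneg_left (hxy j) (hA i j)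

lemma mulVec_lower (hble : ∀ i j, b ≤ B i j) (hx : ∀ i, 0 ≤ x i) (i : Fin D) :
    b * ∑ j, x j ≤ B.mulVec x i := by
  rw [mulVec_apply', Finset.mul_sum]
  exact Finset.sum_le_sum fun j _ => mul_le_mul_of_nonneg_right (hble i j) (hx j)

lemma mulVec_upper (hlec : ∀ i j, B i j ≤ c) (hx : ∀ i, 0 ≤ x i) (i : Fin D) :
    B.mulVec x i ≤ c * ∑ j, x j := by
  rw [mulVec_apply', Finset.mul_sum]
  exact Finset.sum_le_sum fun j _ => mul_le_mul_of_nonneg_right (hlec i j) (hx j)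

lemma mulVec_cross (hb : 0 < b) (hble : ∀ i j, b ≤ B i j) (hlec : ∀ i j, B i j ≤ c)
    (hx : ∀ i, 0 ≤ x i) (i j : Fin D) :
    b * B.mulVec x j ≤ c * B.mulVec x i := by
  have hc : 0 < c := lt_of_lt_of_le hb (le_trans (hble i i) (hlec i i))
  have h1 := mulVec_upper hlec hx j
  have h2 := mulVec_lower hble hx i
  nlinarith [Finset.sum_nonneg (fun j (_ : j ∈ Finset.univ) => hx j)]

lemma nonexpansive (hA : ∀ i j, 0 ≤ A i j) (hx : ∀ i, 0 < x i) (hy : ∀ i, 0 < y i)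
    (hAx : ∀ i, 0 < A.mulVec x i) (hAy : ∀ i, 0 < A.mulVec y i) :
    ER (A.mulVec x) (A.mulVec y) ≤ ER x y := by
  have hm := infR_pos hx hy
  have hlow : ∀ i, infR x y * A.mulVec y i ≤ A.mulVec x i := by
    intro i
    have h := mulVec_mono hA (fun k => infR_mul_le hy k) (x := infR x y • y) i
    rwa [Matrix.mulVec_smul] at h
  have hup : ∀ i, A.mulVec x i ≤ supR x y * A.mulVec y i := by
    intro i
    have h := mulVec_mono hA (fun k => le_supR_mul hy k) (y := supR x y • y) i
    rwa [Matrix.mulVec_smul] at h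
  exact div_le_div₀ (supR_pos hx hy).le (supR_le_of hAy hup) hm (le_infR_of hAy hlow)

lemma diameter (hb : 0 < b) (hble : ∀ i j, b ≤ B i j) (hlec : ∀ i j, B i j ≤ c)
    (hz : ∀ i, 0 ≤ z i) (hz0 : z ≠ 0) (hw : ∀ i, 0 ≤ w i) (hw0 : w ≠ 0) :
    ER (B.mulVec z) (B.mulVec w) ≤ (c / b) ^ 2 := by
  have i0 : Fin D := Classical.arbitrary _
  have hc : 0 < c := lt_of_lt_of_le hb (le_trans (hble i0 i0) (hlec i0 i0))
  have hσz : 0 < ∑ j, z j := by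
    obtain ⟨j, hj⟩ := pos_of_nonneg_ne_zero hz hz0
    exact Finset.sum_pos' (fun k _ => hz k) ⟨j, Finset.mem_univ j, hj⟩
  have hσw : 0 < ∑ j, w j := by
    obtain ⟨j, hj⟩ := pos_of_nonneg_ne_zero hw hw0
    exact Finset.sum_pos' (fun k _ => hw k) ⟨j, Finset.mem_univ j, hj⟩
  have hBw : ∀ i, 0 < B.mulVec w i := fun i =>
    lt_of_lt_of_le (mul_pos hb hσw) (mulVec_lower hble hw i)
  set M := (c * ∑ j, z j) / (b * ∑ j, w j) with hM
  set m := (b * ∑ j, z j) / (c * ∑ j, w j) with hm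
  have hMpos : 0 < M := div_pos (mul_pos hc hσz) (mul_pos hb hσw)
  have hmpos : 0 < m := div_pos (mul_pos hb hσz) (mul_pos hc hσw)
  have hsup : supR (B.mulVec z) (B.mulVec w) ≤ M := by
    apply supR_le_of hBw
    intro i
    calc B.mulVec z i ≤ c * ∑ j, z j := mulVec_upper hlec hz i
      _ = M * (b * ∑ j, w j) := (div_mul_cancel₀ _ (mul_pos hb hσw).ne').symm
      _ ≤ M * B.mulVec w i := mul_le_mul_of_nonneg_left (mulVec_lower hble hw i) hMpos.le
  have hinf : m ≤ infR (B.mulVec z) (B.mulVec w) := by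
    apply le_infR_of hBw
    intro i
    calc m * B.mulVec w i ≤ m * (c * ∑ j, w j) :=
          mul_le_mul_of_nonneg_left (mulVec_upper hlec hw i) hmpos.le
      _ = b * ∑ j, z j := div_mul_cancel₀ _ (mul_pos hc hσw).ne'
      _ ≤ B.mulVec z i := mulVec_lower hble hz i
  have : ER (B.mulVec z) (B.mulVec w) ≤ M / m :=
    div_le_div₀ hMpos.le hsup hmpos hinf
  refine le_trans this (le_of_eq ?_)
  rw [hM, hm]
  field_simp

lemma contraction (hb : 0 < b) (hble : ∀ i j, b ≤ B i j) (hlec : ∀ i j, B i j ≤ c)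
    (hu : ∀ i, 0 < u i) (hv : ∀ i, 0 < v i) :
    ER (B.mulVec u) (B.mulVec v) - 1 ≤ (1 - (b / c) ^ 2) * (ER u v - 1) := by
  have i0 : Fin D := Classical.arbitrary _
  have hbc : b ≤ c := le_trans (hble i0 i0) (hlec i0 i0)
  have hc : 0 < c := lt_of_lt_of_le hb hbc
  set m := infR u v with hmdef
  set M := supR u v with hMdef
  have hm : 0 < m := infR_pos hu hv
  have hMm : m ≤ M := infR_le_supR
  have hσv : 0 < ∑ j, v j :=
    Finset.sum_pos (fun k _ => hv k) Finset.univ_nonempty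
  have hBv : ∀ i, 0 < B.mulVec v i := fun i =>
    lt_of_lt_of_le (mul_pos hb hσv) (mulVec_lower hble (fun k => (hv k).le) i)
  have hσu : 0 < ∑ j, u j :=
    Finset.sum_pos (fun k _ => hu k) Finset.univ_nonempty
  have hBu : ∀ i, 0 < B.mulVec u i := fun i =>
    lt_of_lt_of_le (mul_pos hb hσu) (mulVec_lower hble (fun k => (hu k).le) i)
  set p := B.mulVec (u - m • v) with hpdef
  set q := B.mulVec (M • v - u) with hqdef
  have hum : ∀ k, 0 ≤ (u - m • v) k := by
    intro k
    have := infR_mul_le (x := u) hv k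
    simp only [Pi.sub_apply, Pi.smul_apply, smul_eq_mul]
    linarith
  have hMu : ∀ k, 0 ≤ (M • v - u) k := by
    intro k
    have := le_supR_mul (x := u) hv k
    simp only [Pi.sub_apply, Pi.smul_apply, smul_eq_mul]
    linarith
  have hp : ∀ i, p i = B.mulVec u i - m * B.mulVec v i := by
    intro i
    rw [hpdef, Matrix.mulVec_sub, Matrix.mulVec_smul]
    simp [smul_eq_mul]
  have hq : ∀ i, q i = M * B.mulVec v i - B.mulVec u i := by
    intro i
    rw [hqdef, Matrix.mulVec_sub, Matrix.mulVec_smul]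
    simp [smul_eq_mul]
  have hppos : ∀ i, 0 ≤ p i := fun i => mulVec_nonneg (fun i j => hb.le.trans (hble i j)) hum i
  have hqpos : ∀ i, 0 ≤ q i := fun i => mulVec_nonneg (fun i j => hb.le.trans (hble i j)) hMu i
  have hpc : ∀ i j, b * p j ≤ c * p i := mulVec_cross hb hble hlec hum
  have hqc : ∀ i j, b * q j ≤ c * q i := mulVec_cross hb hble hlec hMu
  have hvc : ∀ i j, b * B.mulVec v j ≤ c * B.mulVec v i :=
    mulVec_cross hb hble hlec (fun k => (hv k).le)
  -- key pointwise inequality, cleared of denominators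
  have keyc : ∀ i j, c ^ 2 * (B.mulVec u i * B.mulVec v j - B.mulVec u j * B.mulVec v i) ≤
      (c ^ 2 - b ^ 2) * ((M - m) * (B.mulVec v i * B.mulVec v j)) := by
    intro i j
    have h1 : (b * q j) * (b * B.mulVec v i) ≤ (c * q i) * (c * B.mulVec v j) :=
      mul_le_mul (hqc i j) (hvc j i) (mul_nonneg hb.le (hBv i).le)
        (mul_nonneg hc.le (hqpos i))
    have h2 : b ^ 2 * (p j * B.mulVec v i) ≤ c ^ 2 * (p j * B.mulVec v i) := by
      have h3 : 0 ≤ p j * B.mulVec v i := mul_nonneg (hppos j) (hBv i).le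
      have h4 : b ^ 2 ≤ c ^ 2 := by nlinarith
      exact mul_le_mul_of_nonneg_right h4 h3
    have heq : (M - m) * B.mulVec v j = q j + p j := by
      have := hq j; have := hp j; linarith
    have e1 : c ^ 2 * (B.mulVec u i * B.mulVec v j) =
        c ^ 2 * (M * (B.mulVec v i * B.mulVec v j)) - c ^ 2 * (q i * B.mulVec v j) := by
      rw [hq i]; ring
    have e2 : c ^ 2 * (B.mulVec u j * B.mulVec v i) =
        c ^ 2 * (m * (B.mulVec v i * B.mulVec v j)) + c ^ 2 * (p j * B.mulVec v i) := by
      rw [hp j]; ring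
    have heq2 : b ^ 2 * (M * (B.mulVec v i * B.mulVec v j)) -
        b ^ 2 * (m * (B.mulVec v i * B.mulVec v j)) =
        b ^ 2 * (q j * B.mulVec v i) + b ^ 2 * (p j * B.mulVec v i) := by
      linear_combination (b ^ 2 * B.mulVec v i) * heq
    nlinarith [h1, h2, e1, e2, heq2]
  have key : ∀ i j, B.mulVec u i / B.mulVec v i - B.mulVec u j / B.mulVec v j ≤
      (1 - (b / c) ^ 2) * (M - m) := by
    intro i j
    have hθ : (1 - (b / c) ^ 2) = (c ^ 2 - b ^ 2) / c ^ 2 := by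
      field_simp
    rw [div_sub_div _ _ (hBv i).ne' (hBv j).ne', div_le_iff₀ (mul_pos (hBv i) (hBv j)), hθ]
    have hc2 : (0:ℝ) < c ^ 2 := by positivity
    rw [div_mul_eq_mul_div, div_mul_eq_mul_div, le_div_iff₀ hc2]
    nlinarith [keyc i j]
  obtain ⟨i1, hi1, -⟩ := exists_sup (fun i => B.mulVec u i / B.mulVec v i)
  obtain ⟨j1, hj1, -⟩ := exists_inf (fun i => B.mulVec u i / B.mulVec v i)
  have hER' : ER (B.mulVec u) (B.mulVec v) =
      (B.mulVec u i1 / B.mulVec v i1) / (B.mulVec u j1 / B.mulVec v j1) := by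
    rw [ER, supR, infR, hi1, hj1]
  have hminf : m ≤ infR (B.mulVec u) (B.mulVec v) := by
    apply le_infR_of hBv
    intro i
    have h := mulVec_mono (fun i j => hb.le.trans (hble i j))
      (fun k => infR_mul_le (x := u) hv k) (x := m • v) i
    rwa [Matrix.mulVec_smul] at h
  have hr'm : m ≤ B.mulVec u j1 / B.mulVec v j1 := by
    rw [← hj1]; exact hminf.trans (le_of_eq rfl)
  have hr'pos : 0 < B.mulVec u j1 / B.mulVec v j1 := div_pos (hBu j1) (hBv j1)
  have hθ0 : 0 ≤ (1 - (b / c) ^ 2) := by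
    have : (b / c) ≤ 1 := (div_le_one hc).2 hbc
    have : (b / c) ^ 2 ≤ 1 := pow_le_one₀ (by positivity) this
    linarith
  rw [hER', div_sub_one hr'pos.ne']
  have step : (B.mulVec u i1 / B.mulVec v i1 - B.mulVec u j1 / B.mulVec v j1) /
      (B.mulVec u j1 / B.mulVec v j1) ≤ ((1 - (b / c) ^ 2) * (M - m)) / m :=
    div_le_div₀ (mul_nonneg hθ0 (by linarith)) (key i1 j1) hm hr'm
  refine step.trans (le_of_eq ?_)
  rw [ER, ← hMdef, ← hmdef, mul_div_assoc, sub_div, div_self hm.ne']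

lemma ne_zero_of_pos (hx : ∀ i, 0 < x i) : x ≠ 0 := by
  intro hc
  have := hx (Classical.arbitrary _)
  rw [hc] at this
  simp at this

lemma enorm_nonneg' (x : Fin D → ℝ) : 0 ≤ _root_.enorm x := Real.sqrt_nonneg _

lemma enorm_mono (hx : ∀ i, 0 ≤ x i) (hxy : ∀ i, x i ≤ y i) : _root_.enorm x ≤ _root_.enorm y :=
  Real.sqrt_le_sqrt (Finset.sum_le_sum fun i _ => pow_le_pow_left₀ (hx i) (hxy i) 2)

lemma enorm_smul' {c : ℝ} (hc : 0 ≤ c) (x : Fin D → ℝ) : _root_.enorm (c • x) = c * _root_.enorm x := by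
  rw [_root_.enorm, _root_.enorm]
  have : ∀ i, ((c • x) i) ^ 2 = c ^ 2 * x i ^ 2 := by
    intro i; rw [smul_apply']; ring
  rw [Finset.sum_congr rfl (fun i _ => this i), ← Finset.mul_sum,
    Real.sqrt_mul (sq_nonneg c), Real.sqrt_sq hc]

lemma coord_le_enorm (hx : ∀ i, 0 ≤ x i) (i : Fin D) : x i ≤ _root_.enorm x := by
  have h1 : x i ^ 2 ≤ ∑ j, x j ^ 2 :=
    Finset.single_le_sum (f := fun j => x j ^ 2) (fun j _ => sq_nonneg _) (Finset.mem_univ i)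
  calc x i = Real.sqrt (x i ^ 2) := (Real.sqrt_sq (hx i)).symm
    _ ≤ _root_.enorm x := Real.sqrt_le_sqrt h1

lemma enorm_pos (hx : ∀ i, 0 ≤ x i) {j : Fin D} (hj : 0 < x j) : 0 < _root_.enorm x :=
  lt_of_lt_of_le hj (coord_le_enorm hx j)

lemma enorm_one' : _root_.enorm (1 : Fin D → ℝ) = Real.sqrt D := by
  rw [_root_.enorm]
  congr 1
  simp

lemma enorm_continuous : Continuous (_root_.enorm (D := D)) := by
  apply Real.continuous_sqrt.comp
  exact continuous_finset_sum _ fun i _ => (continuous_apply i).pow 2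

lemma eigen_align (hb : 0 < b) (hble : ∀ i j, b ≤ B i j) (hlec : ∀ i j, B i j ≤ c)
    (hx : ∀ i, 0 < x i) (hy : ∀ i, 0 < y i) {μ ν : ℝ} (hμ : 0 < μ) (hν : 0 < ν)
    (hBx : B.mulVec x = μ • x) (hBy : B.mulVec y = ν • y) :
    ∃ κ : ℝ, 0 < κ ∧ x = κ • y := by
  have i0 : Fin D := Classical.arbitrary _
  have hc : 0 < c := lt_of_lt_of_le hb (le_trans (hble i0 i0) (hlec i0 i0))
  have h1 := contraction hb hble hlec hx hy
  have hμx : ∀ i, 0 < (μ • x) i := fun i => mul_pos hμ (hx i)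
  rw [hBx, hBy, ER_smul_right hμx hy hν, ER_smul_left hx hy hμ] at h1
  have hge := ER_ge_one hx hy
  have hbc2 : 0 < (b / c) ^ 2 := by positivity
  have hE1 : ER x y = 1 := by nlinarith
  have hinfpos := infR_pos hx hy
  have hsupeq : supR x y = infR x y := by
    rw [ER] at hE1
    field_simp at hE1
    exact hE1
  refine ⟨infR x y, hinfpos, funext fun i => ?_⟩
  have h2 := le_supR_mul (x := x) hy i
  have h3 := infR_mul_le (x := x) hy i
  rw [hsupeq] at h2
  rw [smul_apply']
  linarith

end
end PF

open PF Filter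

/-- For a primitive nonnegative matrix `A`, the iterates `A^n x₀` of any nonzero
nonnegative vector converge in direction (in the Hilbert metric) to the unique
unit-norm strictly positive eigenvector of `A`, at a rate that is at least linear. -/
theorem primitive_power_iteration_converges
    (D : ℕ) (hD : 1 ≤ D) (A : Matrix (Fin D) (Fin D) ℝ)
    (hA : ∀ i j, 0 ≤ A i j)
    (h : ℕ) (hh : 0 < h) (hprim : ∀ i j, 0 < (A ^ h) i j) :
    ∃! xf : Fin D → ℝ,
      ((∀ i, 0 < xf i) ∧ _root_.enorm xf = 1 ∧ ∃ lam : ℝ, 0 < lam ∧ A.mulVec xf = lam • xf) ∧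
      ∀ x0 : Fin D → ℝ, x0 ≠ 0 → (∀ i, 0 ≤ x0 i) →
        (∀ n, h ≤ n → ∀ i, 0 < (A ^ n).mulVec x0 i) ∧
        Filter.Tendsto (fun n => dH ((A ^ n).mulVec x0) xf) Filter.atTop (nhds 0) ∧
        ∃ K r : ℝ, 0 ≤ K ∧ 0 ≤ r ∧ r < 1 ∧
          ∀ n, h ≤ n → dH ((A ^ n).mulVec x0) xf ≤ K * r ^ n := by
  haveI : NeZero D := ⟨by omega⟩
  set B := A ^ h with hBdef
  have hBpos : ∀ i j, 0 < B i j := hprim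
  obtain ⟨pmin, hpmin⟩ := Finite.exists_min (fun p : Fin D × Fin D => B p.1 p.2)
  obtain ⟨pmax, hpmax⟩ := Finite.exists_max (fun p : Fin D × Fin D => B p.1 p.2)
  set b := B pmin.1 pmin.2 with hbdef
  set c := B pmax.1 pmax.2 with hcdef
  have hb : 0 < b := hBpos _ _
  have hble : ∀ i j, b ≤ B i j := fun i j => hpmin (i, j)
  have hlec : ∀ i j, B i j ≤ c := fun i j => hpmax (i, j)
  have hbc : b ≤ c := hble pmax.1 pmax.2
  have hc : 0 < c := lt_of_lt_of_le hb hbc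
  -- nonnegativity of powers, rows of A
  have hAn : ∀ n (i j : Fin D), 0 ≤ (A ^ n) i j := by
    intro n
    induction n with
    | zero =>
      intro i j
      by_cases hij : i = j <;> simp [Matrix.one_apply, hij]
    | succ n ih =>
      intro i j
      rw [pow_succ, Matrix.mul_apply]
      exact Finset.sum_nonneg fun k _ => mul_nonneg (ih i k) (hA k j)
  have hrow : ∀ i, ∃ j, 0 < A i j := by
    intro i
    by_contra hno
    push_neg at hno
    have hzero : ∀ j, A i j = 0 := fun j => le_antisymm (hno j) (hA i j)
    obtain ⟨h', rfl⟩ : ∃ h', h = h' + 1 := ⟨h - 1, by omega⟩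
    have hp := hprim i i
    rw [hBdef, pow_succ', Matrix.mul_apply] at hp
    simp [hzero] at hp
  have posA : ∀ x : Fin D → ℝ, (∀ i, 0 < x i) → ∀ i, 0 < A.mulVec x i :=
    fun x hx i => mulVec_pos_of_rows hA hrow hx i
  have posApow : ∀ (n : ℕ) (x : Fin D → ℝ), (∀ i, 0 < x i) → ∀ i, 0 < (A ^ n).mulVec x i := by
    intro n
    induction n with
    | zero => intro x hx i; rw [pow_zero, Matrix.one_mulVec]; exact hx i
    | succ n ih =>
      intro x hx i
      rw [pow_succ', ← Matrix.mulVec_mulVec]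
      exact posA _ (ih x hx) i
  have posB : ∀ x : Fin D → ℝ, (∀ i, 0 ≤ x i) → x ≠ 0 → ∀ i, 0 < B.mulVec x i :=
    fun x hx hx0 => mulVec_pos_entries hBpos hx hx0
  -- the iteration sequence
  have hone_pos : ∀ i : Fin D, (0:ℝ) < (1 : Fin D → ℝ) i := fun i => one_pos
  have hone_ne : (1 : Fin D → ℝ) ≠ 0 := ne_zero_of_pos hone_pos
  set z : ℕ → Fin D → ℝ := fun n => Nat.rec (B.mulVec 1) (fun _ zn => B.mulVec zn) n
    with hzdef
  have hz00 : z 0 = B.mulVec 1 := rfl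
  have hzsucc : ∀ n, z (n + 1) = B.mulVec (z n) := fun n => rfl
  have hzpos : ∀ n i, 0 < z n i := by
    intro n
    induction n with
    | zero => exact posB 1 (fun k => zero_le_one) hone_ne
    | succ n ih =>
      rw [hzsucc n]
      exact posB (z n) (fun i => (ih i).le) (ne_zero_of_pos ih)
  have hcross : ∀ n i j, b * z n j ≤ c * z n i := by
    intro n
    cases n with
    | zero => exact mulVec_cross hb hble hlec (fun k => zero_le_one)
    | succ n =>
      rw [hzsucc n]
      exact mulVec_cross hb hble hlec (fun i => (hzpos n i).le)
  -- contraction quantities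
  set T := (c / b) ^ 2 with hTdef
  have hT1 : 1 ≤ T := by
    have h1 : 1 ≤ c / b := (one_le_div hb).2 hbc
    nlinarith
  set θ : ℝ := max (1 - (b / c) ^ 2) (1 / 2) with hθdef
  have hθhalf : (1:ℝ)/2 ≤ θ := le_max_right _ _
  have hθpos : 0 < θ := lt_of_lt_of_le (by norm_num) hθhalf
  have hθlt1 : θ < 1 := by
    apply max_lt _ (by norm_num)
    have : 0 < (b / c) ^ 2 := by positivity
    linarith
  have hθ0le : 1 - (b / c) ^ 2 ≤ θ := le_max_left _ _
  -- E bounds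
  have hB1 : ∀ i, 0 ≤ B.mulVec 1 i := fun i => (posB 1 (fun k => zero_le_one) hone_ne i).le
  have hB1ne : B.mulVec (1 : Fin D → ℝ) ≠ 0 := ne_zero_of_pos (posB 1 (fun k => zero_le_one) hone_ne)
  have hE0 : ER (z 1) (z 0) ≤ T :=
    diameter hb hble hlec hB1 hB1ne (fun i => zero_le_one) hone_ne
  have hEstep : ∀ n, ER (z (n + 2)) (z (n + 1)) - 1 ≤ θ * (ER (z (n + 1)) (z n) - 1) := by
    intro n
    have h1 : ER (z (n + 2)) (z (n + 1)) - 1 ≤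
        (1 - (b / c) ^ 2) * (ER (z (n + 1)) (z n) - 1) := by
      exact contraction hb hble hlec (hzpos (n + 1)) (hzpos n)
    have h2 : 0 ≤ ER (z (n + 1)) (z n) - 1 := by
      have := ER_ge_one (hzpos (n + 1)) (hzpos n); linarith
    calc ER (z (n + 2)) (z (n + 1)) - 1 ≤ (1 - (b / c) ^ 2) * (ER (z (n + 1)) (z n) - 1) := h1
      _ ≤ θ * (ER (z (n + 1)) (z n) - 1) := mul_le_mul_of_nonneg_right hθ0le h2
  have hEgeom : ∀ n, ER (z (n + 1)) (z n) - 1 ≤ (T - 1) * θ ^ n := by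
    intro n
    induction n with
    | zero => simpa using hE0
    | succ n ih =>
      calc ER (z (n + 2)) (z (n + 1)) - 1 ≤ θ * (ER (z (n + 1)) (z n) - 1) := hEstep n
        _ ≤ θ * ((T - 1) * θ ^ n) := mul_le_mul_of_nonneg_left ih hθpos.le
        _ = (T - 1) * θ ^ (n + 1) := by ring
  -- normalized sequence
  have i0 : Fin D := ⟨0, by omega⟩
  set e : ℕ → ℝ := fun n => _root_.enorm (z n) with hedef
  have hepos : ∀ n, 0 < e n := fun n => enorm_pos (fun i => (hzpos n i).le) (hzpos n i0)
  set w : ℕ → Fin D → ℝ := fun n => (e n)⁻¹ • z n with hwdef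
  have hwpos : ∀ n i, 0 < w n i := fun n i => mul_pos (inv_pos.2 (hepos n)) (hzpos n i)
  have hwnorm : ∀ n, _root_.enorm (w n) = 1 := by
    intro n
    show _root_.enorm ((e n)⁻¹ • z n) = 1
    rw [enorm_smul' (inv_pos.2 (hepos n)).le, inv_mul_cancel₀ (hepos n).ne']
  have hwle1 : ∀ n i, w n i ≤ 1 := by
    intro n i
    have hcl := coord_le_enorm (x := w n) (fun j => (hwpos n j).le) i
    rwa [hwnorm n] at hcl
  -- uniform lower bound on coordinates
  have hDpos : (0:ℝ) < (D:ℝ) := by exact_mod_cast (by omega : 0 < D)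
  have hsD : 0 < Real.sqrt D := Real.sqrt_pos.2 hDpos
  set ρ := b / (c * Real.sqrt D) with hρdef
  have hρpos : 0 < ρ := div_pos hb (mul_pos hc hsD)
  have hwlb : ∀ n i, ρ ≤ w n i := by
    intro n i
    have hub : ∀ j, z n j ≤ (c * z n i / b) := fun j =>
      (le_div_iff₀ hb).2 (by have := hcross n i j; linarith)
    have hκ : 0 ≤ c * z n i / b := le_trans (hzpos n i0).le (hub i0)
    have h1 : e n ≤ (c * z n i / b) * Real.sqrt D := by
      have h2 : e n ≤ _root_.enorm ((c * z n i / b) • (1 : Fin D → ℝ)) :=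
        enorm_mono (fun j => (hzpos n j).le)
          (fun j => by rw [smul_apply']; simpa using hub j)
      rwa [enorm_smul' hκ, PF.enorm_one'] at h2
    have h3 : z n i / ((c * z n i / b) * Real.sqrt D) ≤ z n i / e n :=
      div_le_div_of_nonneg_left (hzpos n i).le (hepos n) h1
    have h4 : z n i / ((c * z n i / b) * Real.sqrt D) = ρ := by
      rw [hρdef]
      rw [div_eq_div_iff (mul_pos (div_pos (mul_pos hc (hzpos n i)) hb) hsD).ne'
        (mul_pos hc hsD).ne']
      field_simp
    have h5 : w n i = z n i / e n := inv_mul_eq_div _ _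
    rw [h5, ← h4]
    exact h3
  -- increments are geometric
  have hinc : ∀ n i, |w (n + 1) i - w n i| ≤ (T - 1) * θ ^ n := by
    intro n i
    have hm : 0 < infR (z (n + 1)) (z n) := infR_pos (hzpos (n + 1)) (hzpos n)
    have hS : 0 < supR (z (n + 1)) (z n) := supR_pos (hzpos (n + 1)) (hzpos n)
    set m := infR (z (n + 1)) (z n)
    set S := supR (z (n + 1)) (z n)
    have hE : ER (z (n + 1)) (z n) = S / m := rfl
    have hE1 : 1 ≤ S / m := by rw [← hE]; exact ER_ge_one (hzpos (n + 1)) (hzpos n)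
    have hEn1 : S / m - 1 ≤ (T - 1) * θ ^ n := by
      have := hEgeom n; rw [hE] at this; exact this
    have hup : ∀ k, z (n + 1) k ≤ S * z n k := fun k => le_supR_mul (hzpos n) k
    have hlo : ∀ k, m * z n k ≤ z (n + 1) k := fun k => infR_mul_le (hzpos n) k
    have heup : e (n + 1) ≤ S * e n := by
      have h6 : _root_.enorm (z (n + 1)) ≤ _root_.enorm (S • z n) :=
        enorm_mono (fun k => (hzpos (n + 1) k).le)
          (fun k => by rw [smul_apply']; exact hup k)
      rwa [enorm_smul' hS.le] at h6
    have helo : m * e n ≤ e (n + 1) := by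
      have h6 : _root_.enorm (m • z n) ≤ _root_.enorm (z (n + 1)) :=
        enorm_mono (fun k => by rw [smul_apply']; exact mul_nonneg hm.le (hzpos n k).le)
          (fun k => by rw [smul_apply']; exact hlo k)
      rwa [enorm_smul' hm.le] at h6
    have hwni : w n i = z n i / e n := inv_mul_eq_div _ _
    have hwn1i : w (n + 1) i = z (n + 1) i / e (n + 1) := inv_mul_eq_div _ _
    have hwup : w (n + 1) i ≤ (S / m) * w n i := by
      rw [hwn1i, hwni]
      have h2 : z (n + 1) i / e (n + 1) ≤ (S * z n i) / (m * e n) :=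
        div_le_div₀ (mul_nonneg hS.le (hzpos n i).le) (hup i) (mul_pos hm (hepos n)) helo
      calc z (n + 1) i / e (n + 1) ≤ (S * z n i) / (m * e n) := h2
        _ = (S / m) * (z n i / e n) := (div_mul_div_comm _ _ _ _).symm
    have hwlo2 : (m / S) * w n i ≤ w (n + 1) i := by
      rw [hwn1i, hwni]
      have h2 : (m * z n i) / (S * e n) ≤ z (n + 1) i / e (n + 1) :=
        div_le_div₀ (hzpos (n + 1) i).le (hlo i) (hepos (n + 1)) heup
      calc (m / S) * (z n i / e n) = (m * z n i) / (S * e n) := div_mul_div_comm _ _ _ _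
        _ ≤ z (n + 1) i / e (n + 1) := h2
    have key1 : w (n + 1) i - w n i ≤ (T - 1) * θ ^ n := by
      have h7 : w (n + 1) i - w n i ≤ (S / m - 1) * w n i := by
        have := hwup; nlinarith [hwpos n i]
      have h8 : (S / m - 1) * w n i ≤ (S / m - 1) * 1 :=
        mul_le_mul_of_nonneg_left (hwle1 n i) (by linarith)
      linarith
    have key2 : w n i - w (n + 1) i ≤ (T - 1) * θ ^ n := by
      have h7 : w n i - w (n + 1) i ≤ (1 - m / S) * w n i := by nlinarith [hwlo2]
      have h8 : (1 - m / S) * w n i ≤ (1 - m / S) * 1 := by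
        apply mul_le_mul_of_nonneg_left (hwle1 n i)
        have : m / S ≤ 1 := (div_le_one hS).2 infR_le_supR
        linarith
      have h9 : 1 - m / S ≤ S / m - 1 := by
        have hms : m ≤ S := infR_le_supR
        have h12 : (S - m) / S ≤ (S - m) / m :=
          div_le_div_of_nonneg_left (by linarith) hm hms
        have h10 : (S - m) / S = 1 - m / S := by rw [sub_div, div_self hS.ne']
        have h11 : (S - m) / m = S / m - 1 := by rw [sub_div, div_self hm.ne']
        linarith
      linarith
    exact abs_sub_le_iff.2 ⟨key1, key2⟩
  -- limit exists
  have hTm1 : (0:ℝ) ≤ T - 1 := by linarith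
  have hcau : ∀ i, ∃ l, Tendsto (fun n => w n i) atTop (nhds l) := by
    intro i
    apply cauchySeq_tendsto_of_complete
    apply cauchySeq_of_le_geometric θ (T - 1) hθlt1
    intro n
    rw [Real.dist_eq, abs_sub_comm]
    exact hinc n i
  choose xf hxf using hcau
  have hwt : Tendsto w atTop (nhds xf) := tendsto_pi_nhds.2 hxf
  have hxflb : ∀ i, ρ ≤ xf i := fun i =>
    ge_of_tendsto (hxf i) (Filter.Eventually.of_forall fun n => hwlb n i)
  have hxfpos : ∀ i, 0 < xf i := fun i => lt_of_lt_of_le hρpos (hxflb i)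
  have hxfnorm : _root_.enorm xf = 1 := by
    have h1 : Tendsto (fun n => _root_.enorm (w n)) atTop (nhds (_root_.enorm xf)) :=
      (enorm_continuous.tendsto xf).comp hwt
    have h2 : Tendsto (fun n => _root_.enorm (w n)) atTop (nhds 1) := by
      simp only [hwnorm]; exact tendsto_const_nhds
    exact tendsto_nhds_unique h1 h2
  -- pass to the limit in the recurrence
  have hBwt : Tendsto (fun n => B.mulVec (w n)) atTop (nhds (B.mulVec xf)) := by
    rw [tendsto_pi_nhds]
    intro i
    simp only [mulVec_apply']
    exact tendsto_finset_sum _ fun j _ => (hxf j).const_mul (B i j)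
  set μ := _root_.enorm (B.mulVec xf) with hμdef
  have hBxfpos : ∀ i, 0 < B.mulVec xf i :=
    posB xf (fun i => (hxfpos i).le) (ne_zero_of_pos hxfpos)
  have hμpos : 0 < μ := enorm_pos (fun i => (hBxfpos i).le) (hBxfpos i0)
  have hent : Tendsto (fun n => _root_.enorm (B.mulVec (w n))) atTop (nhds μ) :=
    (enorm_continuous.tendsto _).comp hBwt
  have hwrec : ∀ n, w (n + 1) = (_root_.enorm (B.mulVec (w n)))⁻¹ • B.mulVec (w n) := by
    intro n
    have hz1 : z (n + 1) = B.mulVec (z n) := rfl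
    have hzw : z n = e n • w n := (smul_inv_smul₀ (hepos n).ne' (z n)).symm
    have hBz : B.mulVec (z n) = e n • B.mulVec (w n) := by
      conv_lhs => rw [hzw]
      rw [Matrix.mulVec_smul]
    have he1 : e (n + 1) = e n * _root_.enorm (B.mulVec (w n)) := by
      show _root_.enorm (z (n + 1)) = _
      rw [hz1, hBz, enorm_smul' (hepos n).le]
    show (e (n + 1))⁻¹ • z (n + 1) = _
    rw [hz1, hBz, he1, smul_smul]
    congr 1
    rw [mul_inv, mul_comm ((e n)⁻¹), mul_assoc, inv_mul_cancel₀ (hepos n).ne', mul_one]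
  have hlim2 : Tendsto (fun n => w (n + 1)) atTop (nhds (μ⁻¹ • B.mulVec xf)) := by
    have heq : (fun n => w (n + 1)) = fun n => (_root_.enorm (B.mulVec (w n)))⁻¹ • B.mulVec (w n) :=
      funext hwrec
    rw [heq]
    exact (hent.inv₀ hμpos.ne').smul hBwt
  have hlim1 : Tendsto (fun n => w (n + 1)) atTop (nhds xf) :=
    (Filter.tendsto_add_atTop_iff_nat 1).2 hwt
  have hfix : xf = μ⁻¹ • B.mulVec xf := tendsto_nhds_unique hlim1 hlim2
  have hBxf : B.mulVec xf = μ • xf := by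
    calc B.mulVec xf = μ • (μ⁻¹ • B.mulVec xf) := by
          rw [smul_smul, mul_inv_cancel₀ hμpos.ne', one_smul]
      _ = μ • xf := by rw [← hfix]
  have hAxfpos : ∀ i, 0 < A.mulVec xf i := posA xf hxfpos
  have hBA : B.mulVec (A.mulVec xf) = μ • A.mulVec xf := by
    rw [Matrix.mulVec_mulVec]
    have hcomm : B * A = A * B := by rw [hBdef, ← pow_succ, ← pow_succ']
    rw [hcomm, ← Matrix.mulVec_mulVec, hBxf, Matrix.mulVec_smul]
  obtain ⟨lam, hlam, hAeig⟩ := eigen_align hb hble hlec hAxfpos hxfpos hμpos hμpos hBA hBxf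
  have hpoweig : ∀ (y : Fin D → ℝ) (l : ℝ), A.mulVec y = l • y →
      ∀ n, (A ^ n).mulVec y = l ^ n • y := by
    intro y l hy n
    induction n with
    | zero => rw [pow_zero, Matrix.one_mulVec, pow_zero, one_smul]
    | succ n ih =>
      rw [pow_succ, ← Matrix.mulVec_mulVec, hy, Matrix.mulVec_smul, ih, smul_smul, ← pow_succ']
  refine ⟨xf, ⟨⟨hxfpos, hxfnorm, lam, hlam, hAeig⟩, ?_⟩, ?_⟩
  · -- convergence for every nonneg nonzero starting vector
    intro x0 hx00 hx0nn
    have hBx0pos : ∀ i, 0 < B.mulVec x0 i := posB x0 hx0nn hx00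
    have hposn : ∀ n, h ≤ n → ∀ i, 0 < (A ^ n).mulVec x0 i := by
      intro n hn i
      obtain ⟨m, rfl⟩ := Nat.exists_eq_add_of_le hn
      have hsplit : A ^ (h + m) = A ^ m * A ^ h := by rw [← pow_add, add_comm]
      rw [hsplit, ← Matrix.mulVec_mulVec]
      exact posApow m _ hBx0pos i
    have hupos : ∀ n, h ≤ n → ∀ i, 0 < (A ^ n).mulVec x0 i := hposn
    have husucc : ∀ n, (A ^ (n + 1)).mulVec x0 = A.mulVec ((A ^ n).mulVec x0) := by
      intro n
      rw [Matrix.mulVec_mulVec, ← pow_succ']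
    have huB : ∀ n, (A ^ (n + h)).mulVec x0 = B.mulVec ((A ^ n).mulVec x0) := by
      intro n
      rw [Matrix.mulVec_mulVec, hBdef, ← pow_add, add_comm h n]
    have hBxfe : B.mulVec xf = (lam ^ h) • xf := by
      rw [hBdef]; exact hpoweig xf lam hAeig h
    have hlamh : 0 < lam ^ h := pow_pos hlam h
    have hg1 : ∀ n, h ≤ n → 1 ≤ ER ((A ^ n).mulVec x0) xf := fun n hn =>
      ER_ge_one (hupos n hn) hxfpos
    have hgmono : ∀ n, h ≤ n →
        ER ((A ^ (n + 1)).mulVec x0) xf ≤ ER ((A ^ n).mulVec x0) xf := by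
      intro n hn
      have h1 : ER (A.mulVec ((A ^ n).mulVec x0)) (A.mulVec xf) ≤ ER ((A ^ n).mulVec x0) xf :=
        nonexpansive hA (hupos n hn) hxfpos (posA _ (hupos n hn)) (posA _ hxfpos)
      have h2 : ER (A.mulVec ((A ^ n).mulVec x0)) (A.mulVec xf) =
          ER (A.mulVec ((A ^ n).mulVec x0)) xf := by
        rw [hAeig, ER_smul_right (posA _ (hupos n hn)) hxfpos hlam]
      rw [husucc n, ← h2]
      exact h1
    have hgstep : ∀ n, h ≤ n →
        ER ((A ^ (n + h)).mulVec x0) xf - 1 ≤ θ * (ER ((A ^ n).mulVec x0) xf - 1) := by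
      intro n hn
      have h1 : ER (B.mulVec ((A ^ n).mulVec x0)) (B.mulVec xf) - 1 ≤
          (1 - (b / c) ^ 2) * (ER ((A ^ n).mulVec x0) xf - 1) :=
        contraction hb hble hlec (hupos n hn) hxfpos
      have h2 : ER (B.mulVec ((A ^ n).mulVec x0)) (B.mulVec xf) =
          ER (B.mulVec ((A ^ n).mulVec x0)) xf := by
        rw [hBxfe, ER_smul_right
          (posB _ (fun i => (hupos n hn i).le) (ne_zero_of_pos (hupos n hn))) hxfpos hlamh]
      have h3 : 0 ≤ ER ((A ^ n).mulVec x0) xf - 1 := by have := hg1 n hn; linarith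
      rw [huB n, ← h2]
      calc ER (B.mulVec ((A ^ n).mulVec x0)) (B.mulVec xf) - 1
          ≤ (1 - (b / c) ^ 2) * (ER ((A ^ n).mulVec x0) xf - 1) := h1
        _ ≤ θ * (ER ((A ^ n).mulVec x0) xf - 1) := mul_le_mul_of_nonneg_right hθ0le h3
    have hgh : ER ((A ^ h).mulVec x0) xf ≤ T := by
      have huh : (A ^ h).mulVec x0 = B.mulVec x0 := by rw [hBdef]
      have h2 : ER (B.mulVec x0) (B.mulVec xf) = ER (B.mulVec x0) xf := by
        rw [hBxfe, ER_smul_right hBx0pos hxfpos hlamh]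
      rw [huh, ← h2]
      exact diameter hb hble hlec hx0nn hx00 (fun i => (hxfpos i).le) (ne_zero_of_pos hxfpos)
    have hgmono' : ∀ n k, h ≤ n →
        ER ((A ^ (n + k)).mulVec x0) xf ≤ ER ((A ^ n).mulVec x0) xf := by
      intro n k hn
      induction k with
      | zero => exact le_refl _
      | succ k ih =>
        have : n + (k + 1) = (n + k) + 1 := rfl
        rw [this]
        exact le_trans (hgmono (n + k) (by omega)) ih
    have claim : ∀ q k, ER ((A ^ (h + k + q * h)).mulVec x0) xf - 1 ≤ (T - 1) * θ ^ q := by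
      intro q
      induction q with
      | zero =>
        intro k
        have h1 : h + k + 0 * h = h + k := by ring
        rw [h1, pow_zero, mul_one]
        have h2 := hgmono' h k le_rfl
        linarith
      | succ q ih =>
        intro k
        have hidx : h + k + (q + 1) * h = (h + k + q * h) + h := by ring
        rw [hidx]
        calc ER ((A ^ ((h + k + q * h) + h)).mulVec x0) xf - 1
            ≤ θ * (ER ((A ^ (h + k + q * h)).mulVec x0) xf - 1) := hgstep _ (by omega)
          _ ≤ θ * ((T - 1) * θ ^ q) := mul_le_mul_of_nonneg_left (ih k) hθpos.le
          _ = (T - 1) * θ ^ (q + 1) := by ring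
    set K := (T - 1) / θ ^ 2 with hKdef
    set r := θ ^ ((1:ℝ) / h) with hrdef
    have hK0 : 0 ≤ K := div_nonneg hTm1 (by positivity)
    have hr0 : 0 ≤ r := Real.rpow_nonneg hθpos.le _
    have hhr : (0:ℝ) < (h:ℝ) := by exact_mod_cast hh
    have hr1 : r < 1 := Real.rpow_lt_one hθpos.le hθlt1 (by positivity)
    have hrate : ∀ n, h ≤ n → dH ((A ^ n).mulVec x0) xf ≤ K * r ^ n := by
      intro n hn
      set q := (n - h) / h with hqd
      set k := (n - h) % h with hkd
      have hkh : k < h := Nat.mod_lt _ hh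
      have h3 : h * q + k = n - h := Nat.div_add_mod _ _
      have hqk : n = h + k + q * h := by
        have h5 : h + (h * q + k) = n := by rw [h3]; omega
        rw [← h5]; ring
      have h6 : ER ((A ^ n).mulVec x0) xf - 1 ≤ (T - 1) * θ ^ q := by
        have hcl := claim q k; rw [← hqk] at hcl; exact hcl
      have h7 : dH ((A ^ n).mulVec x0) xf ≤ ER ((A ^ n).mulVec x0) xf - 1 := by
        rw [dH_eq]
        exact Real.log_le_sub_one_of_pos (lt_of_lt_of_le zero_lt_one (hg1 n hn))
      have hcast : ((n:ℝ)) ≤ ((q:ℝ) + 2) * h := by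
        have hn' : (n:ℝ) = (h:ℝ) + (k:ℝ) + (q:ℝ) * (h:ℝ) := by
          rw [hqk]; push_cast; ring
        have hkr : (k:ℝ) ≤ (h:ℝ) := by exact_mod_cast hkh.le
        nlinarith
      have hq2 : (n:ℝ) / (h:ℝ) - 2 ≤ (q:ℝ) := by
        rw [sub_le_iff_le_add, div_le_iff₀ hhr]
        linarith
      have hθn : θ ^ ((q:ℝ)) ≤ θ ^ ((n:ℝ) / (h:ℝ) - 2) :=
        Real.rpow_le_rpow_of_exponent_ge hθpos hθlt1.le hq2
      have hrn : r ^ n = θ ^ ((n:ℝ) / (h:ℝ)) := by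
        rw [hrdef, ← Real.rpow_natCast (θ ^ ((1:ℝ) / h)) n, ← Real.rpow_mul hθpos.le]
        congr 1
        field_simp
      have hKr : (T - 1) * θ ^ q ≤ K * r ^ n := by
        rw [hrn, hKdef]
        have hsplit : θ ^ ((n:ℝ) / (h:ℝ) - 2) = θ ^ ((n:ℝ) / (h:ℝ)) / θ ^ (2:ℝ) :=
          Real.rpow_sub hθpos _ _
        have hθ2 : θ ^ (2:ℝ) = θ ^ (2:ℕ) := by
          rw [← Real.rpow_natCast θ 2]; norm_num
        calc (T - 1) * θ ^ q = (T - 1) * θ ^ ((q:ℝ)) := by rw [Real.rpow_natCast]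
          _ ≤ (T - 1) * θ ^ ((n:ℝ) / (h:ℝ) - 2) := mul_le_mul_of_nonneg_left hθn hTm1
          _ = (T - 1) * (θ ^ ((n:ℝ) / (h:ℝ)) / θ ^ (2:ℕ)) := by rw [hsplit, hθ2]
          _ = (T - 1) / θ ^ 2 * θ ^ ((n:ℝ) / (h:ℝ)) := by ring
      linarith
    have htend : Tendsto (fun n => dH ((A ^ n).mulVec x0) xf) atTop (nhds 0) := by
      apply squeeze_zero'
      · filter_upwards [eventually_ge_atTop h] with n hn
        rw [dH_eq]
        exact Real.log_nonneg (hg1 n hn)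
      · filter_upwards [eventually_ge_atTop h] with n hn
        exact hrate n hn
      · have hg0 := (tendsto_pow_atTop_nhds_zero_of_lt_one hr0 hr1).const_mul K
        simpa using hg0
    exact ⟨hposn, htend, K, r, hK0, hr0, hr1, hrate⟩
  · -- uniqueness
    rintro y ⟨⟨hypos, hynorm, lam', hlam', hyeig⟩, -⟩
    have hBy : B.mulVec y = (lam' ^ h) • y := by
      rw [hBdef]; exact hpoweig y lam' hyeig h
    obtain ⟨κ, hκ, hyx⟩ :=
      eigen_align hb hble hlec hypos hxfpos (pow_pos hlam' h) hμpos hBy hBxf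
    have h1 : _root_.enorm y = κ := by rw [hyx, enorm_smul' hκ.le, hxfnorm, mul_one]
    have h2 : κ = 1 := by rw [← h1, hynorm]
    rw [hyx, h2, one_smul]
end

section
/- Let C be a D×D real matrix with nonnegative entries. Then the spectral radius of C is strictly less than 1 if and only if all leading principal minors of the matrix I − C are strictly positive, i.e., for every k with 1 ≤ k ≤ D, the determinant of the top-left k×k submatrix of I − C is strictly positive. -/
open Matrix Polynomial Filter

/-- The spectral radius of a real square matrix is `< 1` iff every complex eigenvalue
(element of the spectrum of the matrix viewed over `ℂ`) has absolute value `< 1`. -/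
def SpectralRadiusLtOne {D : ℕ} (C : Matrix (Fin D) (Fin D) ℝ) : Prop :=
  ∀ mu ∈ spectrum ℂ (C.map (algebraMap ℝ ℂ)), ‖mu‖ < 1

-- Lemma: powers of entrywise-nonneg matrices are entrywise nonneg
theorem pow_nonneg_entries {D : ℕ} {C : Matrix (Fin D) (Fin D) ℝ} (hC : ∀ i j, 0 ≤ C i j) :
    ∀ n, ∀ i j, 0 ≤ (C ^ n) i j := by
  intro n
  induction n with
  | zero => intro i j; simp [Matrix.one_apply]; positivity
  | succ n ih =>
    intro i j
    rw [pow_succ, Matrix.mul_apply]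
    exact Finset.sum_nonneg fun m _ => mul_nonneg (ih i m) (hC m j)

theorem mulVec_mono {D : ℕ} {C : Matrix (Fin D) (Fin D) ℝ} (hC : ∀ i j, 0 ≤ C i j)
    {u v : Fin D → ℝ} (h : ∀ i, u i ≤ v i) : ∀ i, (C.mulVec u) i ≤ (C.mulVec v) i := by
  intro i
  simp only [Matrix.mulVec, dotProduct]
  exact Finset.sum_le_sum fun j _ => mul_le_mul_of_nonneg_left (h j) (hC i j)

section GelfandSection
attribute [local instance] Matrix.linftyOpNormedRing Matrix.linftyOpNormedAlgebra

theorem entries_pow_small {D : ℕ} (C : Matrix (Fin D) (Fin D) ℝ)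
    (h : SpectralRadiusLtOne C) {ε : ℝ} (hε : 0 < ε) :
    ∃ n, 1 ≤ n ∧ ∀ i j, |(C ^ n) i j| < ε := by
  set a := C.map (algebraMap ℝ ℂ) with ha
  haveI : CompleteSpace (Matrix (Fin D) (Fin D) ℂ) := FiniteDimensional.complete ℂ _
  -- spectral radius < 1
  have hfin : (spectrum ℂ a).Finite := Matrix.finite_spectrum a
  set m : NNReal := hfin.toFinset.sup fun z => ‖z‖₊ with hm
  have hm1 : m < 1 := by
    rw [Finset.sup_lt_iff (by norm_num : (⊥ : NNReal) < 1)]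
    intro z hz
    have := h z (hfin.mem_toFinset.mp hz)
    rw [← NNReal.coe_lt_coe]
    simpa using this
  have hsr : spectralRadius ℂ a < 1 := by
    have hle : spectralRadius ℂ a ≤ (m : ENNReal) := by
      apply iSup₂_le
      intro k hk
      exact_mod_cast ENNReal.coe_le_coe.mpr (Finset.le_sup (hfin.mem_toFinset.mpr hk))
    exact lt_of_le_of_lt hle (by exact_mod_cast hm1)
  -- Gelfand
  have hg := spectrum.pow_nnnorm_pow_one_div_tendsto_nhds_spectralRadius a
  have hev := (hg.eventually_lt_const hsr).and (eventually_ge_atTop 1)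
  obtain ⟨N, hN, hN1⟩ := hev.exists
  have hNnorm : ‖a ^ N‖₊ < 1 := by
    by_contra hcon
    push_neg at hcon
    have : (1 : ENNReal) ≤ ((‖a ^ N‖₊ : ENNReal)) ^ (1 / (N : ℝ)) := by
      calc (1 : ENNReal) = 1 ^ (1 / (N : ℝ)) := (ENNReal.one_rpow _).symm
        _ ≤ _ := ENNReal.rpow_le_rpow (by exact_mod_cast hcon)
            (by positivity)
    exact absurd hN (not_lt.mpr this)
  set r : ℝ := ‖a ^ N‖ with hr
  have hr0 : 0 ≤ r := norm_nonneg _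
  have hr1 : r < 1 := hNnorm
  have htend := tendsto_pow_atTop_nhds_zero_of_lt_one hr0 hr1
  obtain ⟨k, hk, hk1⟩ := ((htend.eventually_lt_const hε).and (eventually_ge_atTop 1)).exists
  refine ⟨N * k, Nat.one_le_iff_ne_zero.mpr (by positivity), ?_⟩
  intro i j
  -- entry bound
  have hmap : a ^ (N * k) = ((C ^ (N * k)).map (algebraMap ℝ ℂ)) := by
    rw [ha, ← RingHom.mapMatrix_apply, ← map_pow, RingHom.mapMatrix_apply]
  have hentry : |(C ^ (N * k)) i j| ≤ ‖a ^ (N * k)‖ := by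
    have h1 : ‖(a ^ (N * k)) i j‖₊ ≤ ‖a ^ (N * k)‖₊ := by
      rw [Matrix.linfty_opNNNorm_def]
      calc ‖(a ^ (N * k)) i j‖₊ ≤ ∑ j', ‖(a ^ (N * k)) i j'‖₊ :=
            Finset.single_le_sum (f := fun j' => ‖(a ^ (N * k)) i j'‖₊) (fun _ _ => zero_le) (Finset.mem_univ j)
        _ ≤ _ := Finset.le_sup (f := fun i => ∑ j', ‖(a ^ (N * k)) i j'‖₊) (Finset.mem_univ i)
    have h2 : ‖(a ^ (N * k)) i j‖ ≤ ‖a ^ (N * k)‖ := h1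
    calc |(C ^ (N * k)) i j| = ‖(a ^ (N * k)) i j‖ := by
          rw [hmap]; simp [Matrix.map_apply, Complex.norm_real]
      _ ≤ _ := h2
  have hpow : ‖a ^ (N * k)‖ ≤ r ^ k := by
    rw [pow_mul]
    calc ‖(a ^ N) ^ k‖ ≤ ‖a ^ N‖ ^ k := norm_pow_le' _ (by omega)
      _ = r ^ k := rfl
  exact lt_of_le_of_lt (hentry.trans hpow) hk

end GelfandSection

theorem eq_zero_of_le_mulVec {D : ℕ} {C : Matrix (Fin D) (Fin D) ℝ}
    (hC : ∀ i j, 0 ≤ C i j) (h : SpectralRadiusLtOne C)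
    {y : Fin D → ℝ} (hy0 : ∀ i, 0 ≤ y i) (hCy : ∀ i, y i ≤ (C.mulVec y) i) :
    ∀ i, y i = 0 := by
  have key : ∀ n i, y i ≤ ((C ^ n).mulVec y) i := by
    intro n
    induction n with
    | zero => intro i; simp [Matrix.mulVec_one]  -- C^0 = 1
    | succ n ih =>
      intro i
      have h1 : ((C ^ (n + 1)).mulVec y) i = ((C ^ n).mulVec (C.mulVec y)) i := by
        rw [Matrix.mulVec_mulVec, ← pow_succ]
      rw [h1]
      exact le_trans (ih i) (mulVec_mono (pow_nonneg_entries hC n) hCy i)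
  intro i
  by_contra hne
  have hyi : 0 < y i := lt_of_le_of_ne (hy0 i) (Ne.symm hne)
  set S : ℝ := ∑ j, y j with hS
  have hS0 : 0 ≤ S := Finset.sum_nonneg fun j _ => hy0 j
  have hε : 0 < y i / (S + 1) := by positivity
  obtain ⟨n, -, hn⟩ := entries_pow_small C h hε
  have : y i ≤ (y i / (S + 1)) * S := by
    calc y i ≤ ((C ^ n).mulVec y) i := key n i
      _ = ∑ j, (C ^ n) i j * y j := by rw [Matrix.mulVec, dotProduct]
      _ ≤ ∑ j, (y i / (S + 1)) * y j := by
          refine Finset.sum_le_sum fun j _ => ?_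
          exact mul_le_mul_of_nonneg_right (le_of_lt (lt_of_abs_lt (hn i j))) (hy0 j)
      _ = (y i / (S + 1)) * S := by rw [← Finset.mul_sum]
  have hlt : (y i / (S + 1)) * S < y i := by
    rw [div_mul_eq_mul_div, div_lt_iff₀ (by linarith)]
    nlinarith
  linarith

theorem spectralRadiusLtOne_of_exists_pos {D : ℕ} {C : Matrix (Fin D) (Fin D) ℝ}
    (hC : ∀ i j, 0 ≤ C i j) {x : Fin D → ℝ} (hx : ∀ i, 0 < x i)
    (hCx : ∀ i, (C.mulVec x) i < x i) : SpectralRadiusLtOne C := by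
  intro μ hμ
  set a := C.map (algebraMap ℝ ℂ) with ha
  rw [spectrum.mem_iff] at hμ
  have hdet : (algebraMap ℂ (Matrix (Fin D) (Fin D) ℂ) μ - a).det = 0 := by
    by_contra hd
    exact hμ ((Matrix.isUnit_iff_isUnit_det _).mpr (isUnit_iff_ne_zero.mpr hd))
  obtain ⟨v, hv0, hv⟩ := (Matrix.exists_mulVec_eq_zero_iff).mpr hdet
  have hev : ∀ i, μ * v i = ∑ j, (algebraMap ℝ ℂ) (C i j) * v j := by
    intro i
    have h0 := congrFun hv i
    rw [Matrix.sub_mulVec] at h0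
    have h2 : ((algebraMap ℂ (Matrix (Fin D) (Fin D) ℂ) μ).mulVec v) i = μ * v i := by
      simp [Matrix.mulVec, dotProduct, Matrix.algebraMap_matrix_apply]
    have h3 : (a.mulVec v) i = ∑ j, (algebraMap ℝ ℂ) (C i j) * v j := by
      simp [Matrix.mulVec, dotProduct, ha, Matrix.map_apply]
    have h4 : μ * v i - ∑ j, (algebraMap ℝ ℂ) (C i j) * v j = 0 := by
      rw [← h2, ← h3]; exact h0
    linear_combination h4
  -- the absolute-value inequality per coordinate
  have habs : ∀ i, ‖μ‖ * ‖v i‖ ≤ ∑ j, C i j * ‖v j‖ := by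
    intro i
    calc ‖μ‖ * ‖v i‖ = ‖μ * v i‖ := (norm_mul _ _).symm
      _ = ‖∑ j, (algebraMap ℝ ℂ) (C i j) * v j‖ := by rw [hev i]
      _ ≤ ∑ j, ‖(algebraMap ℝ ℂ) (C i j) * v j‖ := by
          simpa using norm_sum_le Finset.univ
            (fun j => (algebraMap ℝ ℂ) (C i j) * v j)
      _ = ∑ j, C i j * ‖v j‖ := by
          refine Finset.sum_congr rfl fun j _ => ?_
          rw [norm_mul]
          congr 1
          rw [show (algebraMap ℝ ℂ) (C i j) = ((C i j : ℝ) : ℂ) from rfl, Complex.norm_real]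
          exact Real.norm_of_nonneg (hC i j)
  -- weighted max
  obtain ⟨i₁, hvi₁⟩ : ∃ i, v i ≠ 0 := Function.ne_iff.mp hv0
  obtain ⟨i₀, -, hi₀⟩ := Finset.exists_max_image Finset.univ
    (fun i => ‖v i‖ / x i) ⟨i₁, Finset.mem_univ i₁⟩
  set t : ℝ := ‖v i₀‖ / x i₀ with ht
  have ht0 : 0 < t := by
    have h1 : 0 < ‖v i₁‖ / x i₁ := by
      have h2 := norm_pos_iff.mpr hvi₁
      have h3 := hx i₁
      positivity
    exact lt_of_lt_of_le h1 (hi₀ i₁ (Finset.mem_univ i₁))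
  have hbnd : ∀ j, ‖v j‖ ≤ t * x j := by
    intro j
    have := hi₀ j (Finset.mem_univ j)
    rw [div_le_iff₀ (hx j)] at this
    simpa [mul_comm] using this
  have hvi₀ : ‖v i₀‖ = t * x i₀ := by
    rw [ht, div_mul_cancel₀]
    exact ne_of_gt (hx i₀)
  have hmain : ‖μ‖ * (t * x i₀) < t * x i₀ := by
    calc ‖μ‖ * (t * x i₀) = ‖μ‖ * ‖v i₀‖ := by rw [hvi₀]
      _ ≤ ∑ j, C i₀ j * ‖v j‖ := habs i₀
      _ ≤ ∑ j, C i₀ j * (t * x j) := by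
          exact Finset.sum_le_sum fun j _ => mul_le_mul_of_nonneg_left (hbnd j) (hC i₀ j)
      _ = t * (C.mulVec x) i₀ := by
          rw [Matrix.mulVec, dotProduct, Finset.mul_sum]
          exact Finset.sum_congr rfl fun j _ => by ring
      _ < t * x i₀ := by
          exact mul_lt_mul_of_pos_left (hCx i₀) ht0
  have hpos : 0 < t * x i₀ := mul_pos ht0 (hx i₀)
  nlinarith

theorem charpoly_eval {n : Type*} [Fintype n] [DecidableEq n] (M : Matrix n n ℝ) (t : ℝ) :
    M.charpoly.eval t = (t • (1 : Matrix n n ℝ) - M).det := by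
  rw [Matrix.charpoly, ← Polynomial.coe_evalRingHom, RingHom.map_det]
  congr 1
  ext i j
  by_cases hij : i = j
  · subst hij
    simp [Matrix.charmatrix_apply_eq, Matrix.smul_apply, Matrix.one_apply, Matrix.sub_apply]
  · simp [Matrix.charmatrix_apply_ne _ _ _ hij, Matrix.smul_apply, Matrix.one_apply_ne hij,
      Matrix.sub_apply, hij]


theorem schur_det {k : ℕ} (M : Matrix (Fin (k+1)) (Fin (k+1)) ℝ) (h : M 0 0 ≠ 0) :
    M.det = M 0 0 *
      Matrix.det (Matrix.of fun i j : Fin k =>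
        M i.succ j.succ - M i.succ 0 * M 0 j.succ / M 0 0) := by
  set e : Fin 1 ⊕ Fin k ≃ Fin (k+1) := finSumFinEquiv.trans (finCongr (by omega)) with he
  have he1 : e (Sum.inl 0) = 0 := by
    apply Fin.ext
    simp [he, finSumFinEquiv]
  have he2 : ∀ j : Fin k, e (Sum.inr j) = j.succ := by
    intro j
    apply Fin.ext
    simp [he, finSumFinEquiv]
  set A : Matrix (Fin 1) (Fin 1) ℝ := Matrix.of fun _ _ => M 0 0 with hA
  set B : Matrix (Fin 1) (Fin k) ℝ := Matrix.of fun _ j => M 0 j.succ with hB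
  set Cc : Matrix (Fin k) (Fin 1) ℝ := Matrix.of fun i _ => M i.succ 0 with hCc
  set Dd : Matrix (Fin k) (Fin k) ℝ := Matrix.of fun i j => M i.succ j.succ with hDd
  have hsub : M.submatrix e e = Matrix.fromBlocks A B Cc Dd := by
    ext i j
    rcases i with i | i <;> rcases j with j | j <;>
      simp [Matrix.submatrix_apply, Fin.fin_one_eq_zero, he1, he2,
        hA, hB, hCc, hDd]
  have hdetA : A.det = M 0 0 := Matrix.det_fin_one A
  haveI : Invertible A := A.invertibleOfIsUnitDet (by rw [hdetA]; exact isUnit_iff_ne_zero.mpr h)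
  have hinv : ⅟A = Matrix.of fun _ _ : Fin 1 => (M 0 0)⁻¹ := by
    rw [invOf_eq_nonsing_inv, Matrix.inv_def, Matrix.adjugate_fin_one, hdetA]
    ext i j
    simp [Fin.fin_one_eq_zero i, Fin.fin_one_eq_zero j, Matrix.one_apply]
  calc M.det = (M.submatrix e e).det := (Matrix.det_submatrix_equiv_self e M).symm
    _ = (Matrix.fromBlocks A B Cc Dd).det := by rw [hsub]
    _ = A.det * (Dd - Cc * ⅟A * B).det := Matrix.det_fromBlocks₁₁ A B Cc Dd
    _ = M 0 0 * _ := by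
        rw [hdetA]
        congr 1
        congr 1
        ext i j
        simp [Matrix.mul_apply, hinv, Fin.sum_univ_one, hA, hB, hCc, hDd]
        field_simp

theorem hawkins_simon : ∀ (D : ℕ) (C : Matrix (Fin D) (Fin D) ℝ), (∀ i j, 0 ≤ C i j) →
    (∀ (k : ℕ) (hk : k ≤ D), 1 ≤ k →
      0 < Matrix.det ((1 - C).submatrix
        (fun i : Fin k => Fin.castLE hk i) (fun j : Fin k => Fin.castLE hk j))) →
    ∃ x : Fin D → ℝ, (∀ i, 0 < x i) ∧ ∀ i, (C.mulVec x) i < x i := by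
  intro D
  induction D with
  | zero => exact fun C _ _ => ⟨fun _ => 1, fun i => i.elim0, fun i => i.elim0⟩
  | succ D ih =>
    intro C hC hmin
    -- the pivot
    set b : ℝ := 1 - C 0 0 with hbdef
    have hb : 0 < b := by
      have h1 := hmin 1 (by omega) le_rfl
      rw [Matrix.det_fin_one] at h1
      have h2 : C 0 0 < 1 := by
        simpa [Matrix.submatrix_apply, Matrix.sub_apply, Matrix.one_apply] using h1
      simp [hbdef]; linarith
    have hbne : b ≠ 0 := ne_of_gt hb
    have hb00 : (1 - C) 0 0 = b := by simp [Matrix.sub_apply, Matrix.one_apply, hbdef]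
    -- the Schur complement matrix
    set Ct : Matrix (Fin D) (Fin D) ℝ :=
      Matrix.of (fun i j => C i.succ j.succ + C i.succ 0 * C 0 j.succ / b) with hCt
    have hCtnn : ∀ i j, 0 ≤ Ct i j := by
      intro i j
      have := hC i.succ j.succ
      have h2 := hC i.succ 0
      have h3 := hC 0 j.succ
      simp only [hCt, Matrix.of_apply]
      positivity
    -- minors of Ct are positive
    have hminCt : ∀ (k : ℕ) (hk : k ≤ D), 1 ≤ k →
        0 < Matrix.det ((1 - Ct).submatrix
          (fun i : Fin k => Fin.castLE hk i) (fun j : Fin k => Fin.castLE hk j)) := by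
      intro k hk hk1
      have hk' : k + 1 ≤ D + 1 := by omega
      set M : Matrix (Fin (k+1)) (Fin (k+1)) ℝ :=
        (1 - C).submatrix (fun i : Fin (k+1) => Fin.castLE hk' i)
          (fun j : Fin (k+1) => Fin.castLE hk' j) with hM
      have hM00 : M 0 0 = b := hb00
      have hdetM : 0 < M.det := hmin (k+1) hk' (by omega)
      have hschur := schur_det M (by rw [hM00]; exact hbne)
      have hcastsucc : ∀ i : Fin k, Fin.castLE hk' i.succ = (Fin.castLE hk i).succ := by
        intro i; apply Fin.ext; simp
      have hcast0 : Fin.castLE hk' (0 : Fin (k+1)) = 0 := rfl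
      have hinner : (Matrix.of fun i j : Fin k =>
          M i.succ j.succ - M i.succ 0 * M 0 j.succ / M 0 0) =
          (1 - Ct).submatrix
            (fun i : Fin k => Fin.castLE hk i) (fun j : Fin k => Fin.castLE hk j) := by
        ext i j
        simp only [Matrix.of_apply, hM, Matrix.submatrix_apply, hcastsucc, hcast0, hM00]
        have hsn0 : ∀ m : Fin D, (m.succ : Fin (D+1)) ≠ 0 := fun m => Fin.succ_ne_zero m
        have h0sn : ∀ m : Fin D, (0 : Fin (D+1)) ≠ m.succ := fun m => (Fin.succ_ne_zero m).symm
        by_cases hij : i = j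
        · subst hij
          simp [Matrix.sub_apply, Matrix.one_apply, hsn0, h0sn, hCt,
            Fin.succ_injective, hM00]
          ring
        · have hij' : (Fin.castLE hk i).succ ≠ (Fin.castLE hk j).succ := by
            intro hcon
            exact hij (Fin.castLE_injective hk (Fin.succ_injective _ hcon))
          have hij'' : Fin.castLE hk i ≠ Fin.castLE hk j :=
            fun hcon => hij (Fin.castLE_injective hk hcon)
          simp [Matrix.sub_apply, Matrix.one_apply, hsn0, h0sn, hCt, hij', hij'', hM00]
          ring
      rw [hschur, hinner, hM00] at hdetM
      rcases mul_pos_iff.mp hdetM with ⟨-, h⟩ | ⟨hneg, -⟩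
      · exact h
      · linarith
    -- apply the inductive hypothesis
    obtain ⟨y, hy, hCty⟩ := ih Ct hCtnn hminCt
    -- choose a small δ
    have hgap : ∀ i : Fin D, 0 < (y i - (Ct.mulVec y) i) * b :=
      fun i => mul_pos (by linarith [hCty i]) hb
    obtain ⟨δ, hδ0, hδ⟩ : ∃ δ : ℝ, 0 < δ ∧
        ∀ i, δ * C i.succ 0 < (y i - (Ct.mulVec y) i) * b := by
      rcases isEmpty_or_nonempty (Fin D) with hE | hE
      · exact ⟨1, one_pos, fun i => (hE.false i).elim⟩
      · set g : Fin D → ℝ :=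
          fun i => ((y i - (Ct.mulVec y) i) * b) / (C i.succ 0 + 1) with hg
        have hgpos : ∀ i, 0 < g i := fun i =>
          div_pos (hgap i) (by have := hC i.succ 0; linarith)
        set d : ℝ := Finset.univ.inf' Finset.univ_nonempty g with hd
        have hdpos : 0 < d := by
          rw [hd, Finset.lt_inf'_iff]; exact fun i _ => hgpos i
        refine ⟨d, hdpos, fun i => ?_⟩
        have h1 : d ≤ g i := Finset.inf'_le g (Finset.mem_univ i)
        have hcpos : (0:ℝ) < C i.succ 0 + 1 := by have := hC i.succ 0; linarith
        have h2 : g i * (C i.succ 0 + 1) = (y i - (Ct.mulVec y) i) * b := by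
          rw [hg]
          exact div_mul_cancel₀ _ (ne_of_gt hcpos)
        have hc := hC i.succ 0
        calc d * C i.succ 0 ≤ g i * C i.succ 0 := mul_le_mul_of_nonneg_right h1 hc
          _ < g i * (C i.succ 0 + 1) := by nlinarith [hgpos i]
          _ = _ := h2
    -- build the vector x
    set T : ℝ := ∑ j, C 0 j.succ * y j with hT
    have hT0 : 0 ≤ T :=
      Finset.sum_nonneg fun j _ => mul_nonneg (hC 0 j.succ) (le_of_lt (hy j))
    set x0 : ℝ := (δ + T) / b with hx0def
    have hx0 : 0 < x0 := div_pos (by linarith) hb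
    have hx0b : x0 * b = δ + T := div_mul_cancel₀ _ hbne
    set x : Fin (D+1) → ℝ := Fin.cases x0 y with hx
    have hx0' : x 0 = x0 := rfl
    have hxs : ∀ i : Fin D, x i.succ = y i := fun i => by simp [hx]
    refine ⟨x, ?_, ?_⟩
    · intro m
      induction m using Fin.cases with
      | zero => rw [hx0']; exact hx0
      | succ i => rw [hxs]; exact hy i
    · intro m
      induction m using Fin.cases with
      | zero =>
        have hrow0 : (C.mulVec x) 0 = C 0 0 * x0 + T := by
          rw [Matrix.mulVec, dotProduct, Fin.sum_univ_succ, hx0']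
          first
          | rfl
          | (congr 1
             exact Finset.sum_congr rfl fun j _ => by rw [hxs])
        rw [hrow0, hx0']
        have hb' : x0 * b = x0 - C 0 0 * x0 := by rw [hbdef]; ring
        linarith
      | succ i =>
        set c : ℝ := C i.succ 0 with hc
        set u : ℝ := (Ct.mulVec y) i with hu
        have hrow : (C.mulVec x) i.succ = c * x0 + ∑ j, C i.succ j.succ * y j := by
          rw [Matrix.mulVec, dotProduct, Fin.sum_univ_succ, hx0']
          first
          | rfl
          | (congr 1
             exact Finset.sum_congr rfl fun j _ => by rw [hxs])
        have husum : u = (∑ j, C i.succ j.succ * y j) + (c / b) * T := by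
          rw [hu, Matrix.mulVec, dotProduct]
          calc ∑ j, Ct i j * y j
              = ∑ j, (C i.succ j.succ * y j + (c / b) * (C 0 j.succ * y j)) :=
                Finset.sum_congr rfl fun j _ => by simp [hCt]; ring
            _ = _ := by rw [Finset.sum_add_distrib, ← Finset.mul_sum, hT]
        have hR : ∑ j, C i.succ j.succ * y j = u - (c / b) * T := by linarith
        rw [hrow, hR, hxs, hx0def]
        have hkey : c * ((δ + T) / b) + (u - c / b * T) = u + c * δ / b := by
          field_simp
          ring
        rw [hkey]
        have hlt : c * δ / b < y i - u := by
          rw [div_lt_iff₀ hb]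
          nlinarith [hδ i]
        linarith

theorem minors_pos_of_sr {D : ℕ} {C : Matrix (Fin D) (Fin D) ℝ}
    (hC : ∀ i j, 0 ≤ C i j) (h : SpectralRadiusLtOne C) :
    ∀ (k : ℕ) (hk : k ≤ D), 1 ≤ k →
      0 < Matrix.det ((1 - C).submatrix
        (fun i : Fin k => Fin.castLE hk i) (fun j : Fin k => Fin.castLE hk j)) := by
  intro k hk hk1
  set Ck : Matrix (Fin k) (Fin k) ℝ :=
    C.submatrix (fun i : Fin k => Fin.castLE hk i) (fun j : Fin k => Fin.castLE hk j) with hCk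
  -- Step A: no real eigenvalue ≥ 1 for Ck
  have stepA : ∀ t : ℝ, 1 ≤ t → (t • (1 : Matrix (Fin k) (Fin k) ℝ) - Ck).det ≠ 0 := by
    intro t ht hdet
    obtain ⟨v, hv0, hv⟩ := (Matrix.exists_mulVec_eq_zero_iff).mpr hdet
    have heig : ∀ i, (Ck.mulVec v) i = t * v i := by
      intro i
      have h0 := congrFun hv i
      rw [Matrix.sub_mulVec, Matrix.smul_mulVec, Matrix.one_mulVec] at h0
      have : (t • v) i - (Ck.mulVec v) i = 0 := h0
      simp only [Pi.smul_apply, smul_eq_mul] at this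
      linarith
    set y : Fin D → ℝ := fun m => if hm : (m : ℕ) < k then |v ⟨m, hm⟩| else 0 with hy
    have hy0 : ∀ m, 0 ≤ y m := by
      intro m
      rw [hy]
      dsimp only
      split
      exacts [abs_nonneg _, le_rfl]
    have hyc : ∀ i : Fin k, y (Fin.castLE hk i) = |v i| := by
      intro i
      have hlt : ((Fin.castLE hk i : Fin D) : ℕ) < k := i.isLt
      rw [hy]
      dsimp only
      rw [dif_pos hlt]
      exact congrArg (fun z => |v z|) (Fin.ext rfl)
    have hsum : ∀ m : Fin D, ∑ j : Fin k, C m (Fin.castLE hk j) * |v j| ≤ (C.mulVec y) m := by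
      intro m
      rw [Matrix.mulVec, dotProduct]
      have hmap : ∑ j : Fin k, C m (Fin.castLE hk j) * |v j| =
          ∑ m' ∈ Finset.univ.map (Fin.castLEEmb hk), C m m' * y m' := by
        rw [Finset.sum_map]
        refine Finset.sum_congr rfl fun j _ => ?_
        rw [show (Fin.castLEEmb hk) j = Fin.castLE hk j from rfl, hyc j]
      rw [hmap]
      exact Finset.sum_le_sum_of_subset_of_nonneg (Finset.subset_univ _)
        (fun m' _ _ => mul_nonneg (hC m m') (hy0 m'))
    have hCy : ∀ m, y m ≤ (C.mulVec y) m := by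
      intro m
      by_cases hm : (m : ℕ) < k
      · set i : Fin k := ⟨m, hm⟩ with hi
        have hmi : m = Fin.castLE hk i := Fin.ext rfl
        have h1 : y m = |v i| := by rw [hmi, hyc]
        have h2 : |v i| ≤ ∑ j : Fin k, Ck i j * |v j| := by
          calc |v i| ≤ t * |v i| := le_mul_of_one_le_left (abs_nonneg _) ht
            _ = |t * v i| := by rw [abs_mul, abs_of_nonneg (by linarith : (0:ℝ) ≤ t)]
            _ = |(Ck.mulVec v) i| := by rw [heig]
            _ = |∑ j, Ck i j * v j| := by rw [Matrix.mulVec, dotProduct]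
            _ ≤ ∑ j, |Ck i j * v j| := Finset.abs_sum_le_sum_abs _ _
            _ = ∑ j, Ck i j * |v j| := by
                refine Finset.sum_congr rfl fun j _ => ?_
                rw [abs_mul, abs_of_nonneg (by rw [hCk]; exact hC _ _)]
        have h3 : ∑ j : Fin k, Ck i j * |v j| =
            ∑ j : Fin k, C m (Fin.castLE hk j) * |v j| := by
          refine Finset.sum_congr rfl fun j _ => ?_
          rw [hCk, Matrix.submatrix_apply, ← hmi]
        rw [h1]
        exact le_trans h2 (le_trans (le_of_eq h3) (hsum m))
      · have h1 : y m = 0 := by rw [hy]; simp [hm]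
        rw [h1]
        rw [Matrix.mulVec, dotProduct]
        exact Finset.sum_nonneg fun j _ => mul_nonneg (hC m j) (hy0 j)
    have hzero := eq_zero_of_le_mulVec hC h hy0 hCy
    obtain ⟨i₁, hi₁⟩ := Function.ne_iff.mp hv0
    have : y (Fin.castLE hk i₁) = 0 := hzero _
    rw [hyc] at this
    exact hi₁ (abs_eq_zero.mp this)
  -- Step B: polynomial sign argument
  set p : Polynomial ℝ := Ck.charpoly with hp
  have hmonic : p.Monic := Ck.charpoly_monic
  have hdeg : p.natDegree = k := by
    rw [hp, Matrix.charpoly_natDegree_eq_dim, Fintype.card_fin]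
  have hdegpos : 0 < p.degree := by
    have hnd : 0 < p.natDegree := by omega
    exact Polynomial.natDegree_pos_iff_degree_pos.mp hnd
  have htop : Tendsto (fun t => p.eval t) atTop atTop :=
    p.tendsto_atTop_of_leadingCoeff_nonneg hdegpos (by rw [hmonic.leadingCoeff]; norm_num)
  obtain ⟨T, hT0, hT1⟩ := ((htop.eventually_gt_atTop 0).and (eventually_ge_atTop 1)).exists
  have heval : ∀ t : ℝ, p.eval t = (t • (1 : Matrix (Fin k) (Fin k) ℝ) - Ck).det :=
    fun t => charpoly_eval Ck t
  have hne1 : p.eval 1 ≠ 0 := by rw [heval]; exact stepA 1 le_rfl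
  have hpos1 : 0 < p.eval 1 := by
    rcases lt_trichotomy (p.eval 1) 0 with hlt | heq | hgt
    · exfalso
      have hmem : (0:ℝ) ∈ Set.Ioo (p.eval 1) (p.eval T) := ⟨hlt, hT0⟩
      obtain ⟨c, hc, hceval⟩ :=
        intermediate_value_Ioo hT1 (p.continuous.continuousOn) hmem
      have := stepA c (le_of_lt hc.1)
      rw [← heval c] at this
      exact this hceval
    · exact absurd heq hne1
    · exact hgt
  have hfinal : (1 - C).submatrix (fun i : Fin k => Fin.castLE hk i)
      (fun j : Fin k => Fin.castLE hk j) = (1:ℝ) • (1 : Matrix (Fin k) (Fin k) ℝ) - Ck := by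
    rw [one_smul]
    ext i j
    rw [Matrix.submatrix_apply, Matrix.sub_apply, Matrix.sub_apply, hCk, Matrix.submatrix_apply]
    congr 1
    by_cases hij : i = j
    · subst hij; simp [Matrix.one_apply]
    · rw [Matrix.one_apply_ne (fun hcon => hij (Fin.castLE_injective hk hcon)),
        Matrix.one_apply_ne hij]
  rw [hfinal, ← heval 1]
  exact hpos1


theorem spectral_radius_lt_one_iff_leading_principal_minors_pos
    (D : ℕ) (C : Matrix (Fin D) (Fin D) ℝ) (hC : ∀ i j, 0 ≤ C i j) :
    SpectralRadiusLtOne C ↔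
      ∀ (k : ℕ) (hk : k ≤ D), 1 ≤ k →
        0 < Matrix.det ((1 - C).submatrix
          (fun i : Fin k => Fin.castLE hk i) (fun j : Fin k => Fin.castLE hk j)) := by
  constructor
  · intro h
    exact minors_pos_of_sr hC h
  · intro h
    obtain ⟨x, hx, hCx⟩ := hawkins_simon D C hC h
    exact spectralRadiusLtOne_of_exists_pos hC hx hCx
end

section
/- Let C be a D×D real matrix with nonnegative entries. Then the spectral radius of C is strictly less than 1 if and only if there exists a diagonal D×D real matrix P with all diagonal entries strictly positive such that Cᵀ·P·C − P is negative definite. -/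
open Matrix Filter
open scoped NNReal

attribute [local instance] Matrix.linftyOpNormedRing Matrix.linftyOpNormedAlgebra

namespace SpecAux

lemma pow_entry_nonneg {D : ℕ} {C : Matrix (Fin D) (Fin D) ℝ} (hC : ∀ i j, 0 ≤ C i j) :
    ∀ n i j, 0 ≤ (C ^ n) i j := by
  intro n
  induction n with
  | zero =>
    intro i j
    rw [pow_zero]
    by_cases h : i = j <;> simp [Matrix.one_apply, h]
  | succ n ih =>
    intro i j
    rw [pow_succ, Matrix.mul_apply]
    exact Finset.sum_nonneg fun k _ => mul_nonneg (ih i k) (hC k j)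

lemma spectrum_transpose {D : ℕ} (M : Matrix (Fin D) (Fin D) ℂ) :
    spectrum ℂ Mᵀ = spectrum ℂ M := by
  ext μ
  simp only [spectrum.mem_iff]
  have h : algebraMap ℂ (Matrix (Fin D) (Fin D) ℂ) μ - Mᵀ = (algebraMap ℂ _ μ - M)ᵀ := by
    rw [transpose_sub]
    congr 1
    simp [Algebra.algebraMap_eq_smul_one, transpose_smul, transpose_one]
  rw [h, Matrix.isUnit_iff_isUnit_det, det_transpose, ← Matrix.isUnit_iff_isUnit_det]

lemma srlo_transpose {D : ℕ} {C : Matrix (Fin D) (Fin D) ℝ} (h : SpectralRadiusLtOne C) :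
    SpectralRadiusLtOne Cᵀ := by
  intro μ hμ
  apply h
  rwa [Matrix.transpose_map, spectrum_transpose] at hμ

lemma exists_rowsum_lt {D : ℕ} [NeZero D] (C : Matrix (Fin D) (Fin D) ℝ)
    (h : SpectralRadiusLtOne C) : ∃ n, 0 < n ∧ ∀ i, ∑ j, (C ^ n) i j < 1 := by
  haveI : CompleteSpace (Matrix (Fin D) (Fin D) ℂ) := FiniteDimensional.complete ℂ _
  set B : Matrix (Fin D) (Fin D) ℂ := C.map (algebraMap ℝ ℂ) with hB
  have hr : spectralRadius ℂ B < 1 := by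
    have := spectrum.spectralRadius_lt_of_forall_lt B (r := 1) (fun z hz => by
      have := h z hz
      rw [← NNReal.coe_lt_coe]
      simpa using this)
    simpa using this
  have hg := spectrum.pow_nnnorm_pow_one_div_tendsto_nhds_spectralRadius B
  have hev : ∀ᶠ n : ℕ in atTop, ((‖B ^ n‖₊ : ENNReal)) ^ (1 / (n : ℝ)) < 1 :=
    hg.eventually_lt_const hr
  obtain ⟨n, hn1, hn⟩ := (hev.and (eventually_ge_atTop 1)).exists
  have hnorm : ‖B ^ n‖ < 1 := by
    have hpos : (0 : ℝ) < 1 / n := by positivity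
    by_contra hc
    push_neg at hc
    have h1' : (1 : ENNReal) ≤ (‖B ^ n‖₊ : ENNReal) := by
      exact_mod_cast (show (1 : ℝ≥0) ≤ ‖B ^ n‖₊ by exact_mod_cast hc)
    have : (1 : ENNReal) ≤ (‖B ^ n‖₊ : ENNReal) ^ (1 / (n : ℝ)) := by
      calc (1 : ENNReal) = 1 ^ (1 / (n : ℝ)) := by rw [ENNReal.one_rpow]
      _ ≤ (‖B ^ n‖₊ : ENNReal) ^ (1 / (n : ℝ)) := ENNReal.rpow_le_rpow h1' hpos.le
    exact absurd hn1 (not_lt.mpr this)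
  refine ⟨n, hn, fun i => ?_⟩
  have hrow : ∑ j, ‖(B ^ n) i j‖ ≤ ‖B ^ n‖ := by
    have h2 : ∑ j, ‖(B ^ n) i j‖₊ ≤ ‖B ^ n‖₊ := by
      rw [Matrix.linfty_opNNNorm_def]
      exact Finset.le_sup (f := fun i => ∑ j, ‖(B ^ n) i j‖₊) (Finset.mem_univ i)
    have := NNReal.coe_le_coe.mpr h2
    simpa using this
  have hmap : B ^ n = (C ^ n).map (algebraMap ℝ ℂ) := by
    rw [hB]
    simp only [← RingHom.mapMatrix_apply, map_pow]
  have hentry : ∀ j, ‖(B ^ n) i j‖ = |(C ^ n) i j| := by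
    intro j
    rw [hmap]
    simp [Matrix.map_apply]
  calc ∑ j, (C ^ n) i j ≤ ∑ j, |(C ^ n) i j| := Finset.sum_le_sum fun j _ => le_abs_self _
  _ = ∑ j, ‖(B ^ n) i j‖ := by simp [hentry]
  _ ≤ ‖B ^ n‖ := hrow
  _ < 1 := hnorm

lemma exists_pos_vec {D n : ℕ} (hn : 0 < n) (C : Matrix (Fin D) (Fin D) ℝ)
    (hC : ∀ i j, 0 ≤ C i j) (h : ∀ i, ∑ j, (C ^ n) i j < 1) :
    ∃ v : Fin D → ℝ, (∀ i, 0 < v i) ∧ ∀ i, (C *ᵥ v) i < v i := by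
  set s : ℕ → Fin D → ℝ := fun k => (C ^ k) *ᵥ (fun _ => 1) with hs
  have hsk : ∀ k i, s k i = ∑ j, (C ^ k) i j := by
    intro k i
    simp [hs, Matrix.mulVec, dotProduct]
  have hs0 : ∀ i, s 0 i = 1 := by
    intro i
    rw [hsk]
    simp [Matrix.one_apply]
  have hsnn : ∀ k i, 0 ≤ s k i := fun k i => by
    rw [hsk]
    exact Finset.sum_nonneg fun j _ => pow_entry_nonneg hC k i j
  have hstep : ∀ k, C *ᵥ s k = s (k + 1) := by
    intro k
    rw [hs]
    simp only [Matrix.mulVec_mulVec, ← pow_succ']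
  set v : Fin D → ℝ := ∑ k ∈ Finset.range n, s k with hv
  have hvi : ∀ i, v i = ∑ k ∈ Finset.range n, s k i := by
    intro i
    rw [hv]
    simp
  refine ⟨v, ?_, ?_⟩
  · intro i
    rw [hvi]
    have h1 : (1 : ℝ) = s 0 i := (hs0 i).symm
    calc (0 : ℝ) < 1 := one_pos
    _ = s 0 i := h1
    _ ≤ ∑ k ∈ Finset.range n, s k i :=
        Finset.single_le_sum (fun k _ => hsnn k i) (Finset.mem_range.mpr hn)
  · intro i
    have hlin : C *ᵥ v = ∑ k ∈ Finset.range n, C *ᵥ s k := by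
      rw [hv, ← Matrix.mulVecLin_apply, map_sum]
      simp [Matrix.mulVecLin_apply]
    have h2 : (C *ᵥ v) i = ∑ k ∈ Finset.range n, s (k + 1) i := by
      rw [hlin]
      simp only [Finset.sum_apply]
      exact Finset.sum_congr rfl fun k _ => by rw [hstep]
    have h3 : ∑ k ∈ Finset.range (n + 1), s k i
        = ∑ k ∈ Finset.range n, s (k + 1) i + s 0 i := Finset.sum_range_succ' _ _
    have h4 : ∑ k ∈ Finset.range (n + 1), s k i
        = ∑ k ∈ Finset.range n, s k i + s n i := Finset.sum_range_succ _ _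
    have h5 : s n i < 1 := by
      rw [hsk]
      exact h i
    rw [h2, hvi]
    rw [h3] at h4
    rw [hs0 i] at h4
    linarith

lemma cs_step {D : ℕ} (C : Matrix (Fin D) (Fin D) ℝ) (hC : ∀ i j, 0 ≤ C i j)
    (v x : Fin D → ℝ) (hv : ∀ j, 0 < v j) (i : Fin D) :
    (C *ᵥ x) i ^ 2 ≤ (C *ᵥ v) i * (∑ j, C i j * x j ^ 2 / v j) := by
  have key := Finset.sum_mul_sq_le_sq_mul_sq Finset.univ
    (fun j => Real.sqrt (C i j * v j)) (fun j => Real.sqrt (C i j / v j) * x j)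
  have h1 : ∀ j, Real.sqrt (C i j * v j) * (Real.sqrt (C i j / v j) * x j) = C i j * x j := by
    intro j
    rw [← mul_assoc, ← Real.sqrt_mul (mul_nonneg (hC i j) (hv j).le)]
    have he : C i j * v j * (C i j / v j) = C i j ^ 2 := by
      field_simp [(hv j).ne']
    rw [he, Real.sqrt_sq (hC i j)]
  have h2 : ∀ j, Real.sqrt (C i j * v j) ^ 2 = C i j * v j := fun j =>
    Real.sq_sqrt (mul_nonneg (hC i j) (hv j).le)
  have h3 : ∀ j, (Real.sqrt (C i j / v j) * x j) ^ 2 = C i j * x j ^ 2 / v j := by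
    intro j
    rw [mul_pow, Real.sq_sqrt (div_nonneg (hC i j) (hv j).le)]
    ring
  simp only [h1, h2, h3] at key
  simpa [Matrix.mulVec, dotProduct] using key

lemma key_lt {D : ℕ} (C : Matrix (Fin D) (Fin D) ℝ) (hC : ∀ i j, 0 ≤ C i j)
    (v u : Fin D → ℝ) (hv : ∀ i, 0 < v i) (hu : ∀ i, 0 < u i)
    (hCv : ∀ i, (C *ᵥ v) i ≤ v i) (hCu : ∀ j, (Cᵀ *ᵥ u) j < u j)
    (x : Fin D → ℝ) (hx : x ≠ 0) :
    ∑ i, u i / v i * (C *ᵥ x) i ^ 2 < ∑ i, u i / v i * x i ^ 2 := by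
  have hS : ∀ i, 0 ≤ ∑ j, C i j * x j ^ 2 / v j := fun i =>
    Finset.sum_nonneg fun j _ =>
      div_nonneg (mul_nonneg (hC i j) (sq_nonneg _)) (hv j).le
  have step1 : ∑ i, u i / v i * (C *ᵥ x) i ^ 2
      ≤ ∑ i, u i * ∑ j, C i j * x j ^ 2 / v j := by
    apply Finset.sum_le_sum
    intro i _
    have hq : (0 : ℝ) ≤ u i / v i := div_nonneg (hu i).le (hv i).le
    calc u i / v i * (C *ᵥ x) i ^ 2
        ≤ u i / v i * ((C *ᵥ v) i * ∑ j, C i j * x j ^ 2 / v j) :=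
          mul_le_mul_of_nonneg_left (cs_step C hC v x hv i) hq
      _ ≤ u i / v i * (v i * ∑ j, C i j * x j ^ 2 / v j) :=
          mul_le_mul_of_nonneg_left (mul_le_mul_of_nonneg_right (hCv i) (hS i)) hq
      _ = u i * ∑ j, C i j * x j ^ 2 / v j := by
          rw [← mul_assoc, div_mul_cancel₀ _ (hv i).ne']
  have step2 : ∑ i, u i * ∑ j, C i j * x j ^ 2 / v j
      = ∑ j, x j ^ 2 / v j * (Cᵀ *ᵥ u) j := by
    simp only [Finset.mul_sum, Matrix.mulVec, dotProduct, Matrix.transpose_apply]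
    rw [Finset.sum_comm]
    exact Finset.sum_congr rfl fun j _ => Finset.sum_congr rfl fun i _ => by ring
  have step3 : ∑ j, x j ^ 2 / v j * (Cᵀ *ᵥ u) j < ∑ j, x j ^ 2 / v j * u j := by
    obtain ⟨j0, hj0⟩ := Function.ne_iff.mp hx
    have hxj0 : (0 : ℝ) < x j0 ^ 2 :=
      lt_of_le_of_ne (sq_nonneg _) (Ne.symm (pow_ne_zero 2 hj0))
    apply Finset.sum_lt_sum
    · intro j _
      exact mul_le_mul_of_nonneg_left (hCu j).le
        (div_nonneg (sq_nonneg _) (hv j).le)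
    · exact ⟨j0, Finset.mem_univ _,
        mul_lt_mul_of_pos_left (hCu j0) (div_pos hxj0 (hv j0))⟩
  have step4 : ∑ j, x j ^ 2 / v j * u j = ∑ j, u j / v j * x j ^ 2 :=
    Finset.sum_congr rfl fun j _ => by ring
  calc ∑ i, u i / v i * (C *ᵥ x) i ^ 2
      ≤ ∑ i, u i * ∑ j, C i j * x j ^ 2 / v j := step1
    _ = ∑ j, x j ^ 2 / v j * (Cᵀ *ᵥ u) j := step2
    _ < ∑ j, x j ^ 2 / v j * u j := step3
    _ = ∑ j, u j / v j * x j ^ 2 := step4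

lemma quadform_diag {D : ℕ} (d : Fin D → ℝ) (C : Matrix (Fin D) (Fin D) ℝ) (x : Fin D → ℝ) :
    x ⬝ᵥ (Cᵀ * diagonal d * C - diagonal d).mulVec x
      = ∑ i, d i * (C *ᵥ x) i ^ 2 - ∑ i, d i * x i ^ 2 := by
  rw [sub_mulVec, dotProduct_sub]
  congr 1
  · rw [← mulVec_mulVec, ← mulVec_mulVec, dotProduct_mulVec, vecMul_transpose]
    simp only [dotProduct, mulVec_diagonal]
    exact Finset.sum_congr rfl fun i _ => by ring
  · simp only [dotProduct, mulVec_diagonal]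
    exact Finset.sum_congr rfl fun i _ => by ring

lemma eigvec {D : ℕ} (B : Matrix (Fin D) (Fin D) ℂ) (μ : ℂ) (h : μ ∈ spectrum ℂ B) :
    ∃ v : Fin D → ℂ, v ≠ 0 ∧ B *ᵥ v = μ • v := by
  rw [spectrum.mem_iff] at h
  have hdet : (algebraMap ℂ (Matrix (Fin D) (Fin D) ℂ) μ - B).det = 0 := by
    by_contra hd
    exact h ((Matrix.isUnit_iff_isUnit_det _).mpr (isUnit_iff_ne_zero.mpr hd))
  obtain ⟨v, hv, hv0⟩ := Matrix.exists_mulVec_eq_zero_iff.mpr hdet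
  refine ⟨v, hv, ?_⟩
  have h0 : (algebraMap ℂ (Matrix (Fin D) (Fin D) ℂ) μ - B) *ᵥ v = 0 := hv0
  rw [sub_mulVec, Algebra.algebraMap_eq_smul_one, smul_mulVec, one_mulVec,
    sub_eq_zero] at h0
  exact h0.symm

end SpecAux

theorem spectral_radius_lt_one_iff_diagonal_lyapunov
    (D : ℕ) (C : Matrix (Fin D) (Fin D) ℝ) (hC : ∀ i j, 0 ≤ C i j) :
    SpectralRadiusLtOne C ↔
      ∃ P : Matrix (Fin D) (Fin D) ℝ, P.IsDiag ∧ (∀ i, 0 < P i i) ∧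
        ∀ x : Fin D → ℝ, x ≠ 0 → x ⬝ᵥ (Cᵀ * P * C - P).mulVec x < 0 := by
  constructor
  · intro h
    rcases Nat.eq_zero_or_pos D with hD | hD
    · refine ⟨0, Matrix.isDiag_zero, fun i => absurd i.isLt (by omega), fun x hx => ?_⟩
      exact absurd (funext fun i => absurd i.isLt (by omega)) hx
    · haveI : NeZero D := ⟨hD.ne'⟩
      obtain ⟨n, hn, hrow⟩ := SpecAux.exists_rowsum_lt C h
      obtain ⟨m, hm, hcol⟩ := SpecAux.exists_rowsum_lt Cᵀ (SpecAux.srlo_transpose h)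
      obtain ⟨v, hv, hCv⟩ := SpecAux.exists_pos_vec hn C hC hrow
      obtain ⟨u, hu, hCu⟩ := SpecAux.exists_pos_vec hm Cᵀ (fun i j => hC j i) hcol
      refine ⟨Matrix.diagonal (fun i => u i / v i), Matrix.isDiag_diagonal _,
        fun i => ?_, fun x hx => ?_⟩
      · rw [Matrix.diagonal_apply_eq]
        exact div_pos (hu i) (hv i)
      · rw [SpecAux.quadform_diag]
        have := SpecAux.key_lt C hC v u hv hu (fun i => (hCv i).le) hCu x hx
        linarith
  · rintro ⟨P, hPd, hPpos, hP⟩ μ hμ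
    obtain ⟨vc, hvc0, hvc⟩ := SpecAux.eigvec _ μ hμ
    set w : Fin D → ℝ := fun i => ‖vc i‖ with hw
    obtain ⟨i0, hi0⟩ := Function.ne_iff.mp hvc0
    have hwnn : ∀ i, 0 ≤ w i := fun i => norm_nonneg _
    have hwk : ∀ i, ‖μ‖ * w i ≤ (C *ᵥ w) i := by
      intro i
      have h1 : ‖μ‖ * w i = ‖(C.map (algebraMap ℝ ℂ) *ᵥ vc) i‖ := by
        rw [hvc]
        simp [hw, Pi.smul_apply, smul_eq_mul, _root_.map_mul]
      rw [h1]
      have h2 : (C.map (algebraMap ℝ ℂ) *ᵥ vc) i = ∑ j, (algebraMap ℝ ℂ) (C i j) * vc j := by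
        simp [Matrix.mulVec, dotProduct, Matrix.map_apply]
      rw [h2]
      calc ‖∑ j, (algebraMap ℝ ℂ) (C i j) * vc j‖
          ≤ ∑ j, ‖(algebraMap ℝ ℂ) (C i j) * vc j‖ := norm_sum_le _ _
        _ = ∑ j, C i j * w j := by
            refine Finset.sum_congr rfl fun j _ => ?_
            rw [norm_mul]
            simp [hw, Real.norm_eq_abs, abs_of_nonneg (hC i j)]
        _ = (C *ᵥ w) i := by simp [Matrix.mulVec, dotProduct]
    have hwne : w ≠ 0 := by
      intro hz
      apply hi0
      have h0 : ‖vc i0‖ = 0 := by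
        have := congrFun hz i0
        simpa [hw] using this
      exact norm_eq_zero.mp h0
    have hform := hP w hwne
    rw [← hPd.diagonal_diag, SpecAux.quadform_diag] at hform
    have hwpos : 0 < w i0 := norm_pos_iff.mpr hi0
    have hS : 0 < ∑ i, P.diag i * w i ^ 2 :=
      Finset.sum_pos' (fun i _ => mul_nonneg (hPpos i).le (sq_nonneg _))
        ⟨i0, Finset.mem_univ _, mul_pos (hPpos i0) (pow_pos hwpos 2)⟩
    have h2 : ‖μ‖ ^ 2 * ∑ i, P.diag i * w i ^ 2
        ≤ ∑ i, P.diag i * (C *ᵥ w) i ^ 2 := by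
      rw [Finset.mul_sum]
      apply Finset.sum_le_sum
      intro i _
      have h3 : (‖μ‖ * w i) ^ 2 ≤ (C *ᵥ w) i ^ 2 :=
        pow_le_pow_left₀ (mul_nonneg (norm_nonneg μ) (hwnn i)) (hwk i) 2
      calc ‖μ‖ ^ 2 * (P.diag i * w i ^ 2)
          = P.diag i * (‖μ‖ * w i) ^ 2 := by ring
        _ ≤ P.diag i * (C *ᵥ w) i ^ 2 := mul_le_mul_of_nonneg_left h3 (hPpos i).le
    have hlt : ‖μ‖ ^ 2 < 1 := by
      have h4 : ‖μ‖ ^ 2 * (∑ i, P.diag i * w i ^ 2)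
          < 1 * (∑ i, P.diag i * w i ^ 2) := by
        rw [one_mul]
        linarith
      exact lt_of_mul_lt_mul_right h4 hS.le
    exact (pow_lt_one_iff_of_nonneg (norm_nonneg μ) two_ne_zero).mp hlt
end
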